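/- For any fixed Dyck path W of length 2n and any S ⊆ [2n-1], the flag h-vector β of the distributive lattice J(2 × n) satisfies β(S) = |{w ∈ D_n : D_W(w) = S}|, where D_W(w) is the descent set of w with respect to W. -/

import Mathlib

open Finset

/-- The `i`-th letter (1-indexed) of a word `w`; `true` = vertical step `v`,
`false` = horizontal step `h`; junk value `false` out of range. -/
def ltr {m : ℕ} (w : Fin m → Bool) (i : ℕ) : Bool :=
  if h : 1 ≤ i ∧ i ≤ m then w ⟨i - 1, by omega⟩ else false

/-- The number of occurrences of the letter `b` among the first `i` letters of `w`. -/
def pcnt {m : ℕ} (w : Fin m → Bool) (b : Bool) (i : ℕ) : ℕ :=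
  ((Finset.Icc 1 i).filter fun j => ltr w j = b).card

/-- `w` is a Dyck path of length `2n`: `n` vertical steps and every prefix has at
least as many `v`'s as `h`'s. -/
def IsDyck (n : ℕ) (w : Fin (2 * n) → Bool) : Prop :=
  pcnt w true (2 * n) = n ∧ ∀ i ≤ 2 * n, pcnt w false i ≤ pcnt w true i

/-- The descent (valley) set of `w`: positions `i` with `w_i = h`, `w_{i+1} = v`. -/
def Des {n : ℕ} (w : Fin (2 * n) → Bool) : Finset ℕ :=
  (Finset.Icc 1 (2 * n - 1)).filter fun i => ltr w i = false ∧ ltr w (i + 1) = true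

/-- The (1-indexed) position in `W` of the `j`-th occurrence of the letter `b`. -/
def occPos {m : ℕ} (W : Fin m → Bool) (b : Bool) (j : ℕ) : ℕ :=
  ((Finset.Icc 1 m).filter fun i => ltr W i = b ∧ pcnt W b i = j).sup id

/-- The descent set of `w` with respect to a fixed Dyck path `W`, in the encoding
with letters `v_1,…,v_n,h_1,…,h_n`: positions `i` such that the letter `w_{i+1}`
comes before the letter `w_i` in `W`. -/
def DWset {n : ℕ} (W w : Fin (2 * n) → Bool) : Finset ℕ :=
  (Finset.Icc 1 (2 * n - 1)).filter fun i =>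
    occPos W (ltr w (i + 1)) (pcnt w (ltr w (i + 1)) (i + 1)) <
      occPos W (ltr w i) (pcnt w (ltr w i) i)

/-- The flag `f`-vector of the distributive lattice `J(2 × n)` of order ideals
(lower sets) of `2 × n`: the number of chains of lower sets whose set of ranks
(cardinalities) is `S`. -/
noncomputable def flagAlpha (n : ℕ) (S : Finset ℕ) : ℕ :=
  Nat.card {C : Finset (Finset (Fin 2 × Fin n)) //
    (∀ I ∈ C, IsLowerSet (↑I : Set (Fin 2 × Fin n))) ∧
    IsChain (· ⊆ ·) (↑C : Set (Finset (Fin 2 × Fin n))) ∧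
    C.image Finset.card = S}

/-- The flag `h`-vector of `J(2 × n)`. -/
noncomputable def flagBeta (n : ℕ) (S : Finset ℕ) : ℤ :=
  ∑ T ∈ S.powerset, (-1 : ℤ) ^ (S.card - T.card) * (flagAlpha n T : ℤ)

section basiclem
variable {m : ℕ} {w : Fin m → Bool} {b : Bool}

lemma pcnt_zero : pcnt w b 0 = 0 := by simp [pcnt]

lemma pcnt_succ (i : ℕ) :
    pcnt w b (i + 1) = pcnt w b i + (if ltr w (i + 1) = b then 1 else 0) := by
  unfold pcnt
  have h : Finset.Icc 1 (i + 1) = insert (i + 1) (Finset.Icc 1 i) := by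
    ext j; simp [Finset.mem_Icc, Finset.mem_insert]; omega
  rw [h, Finset.filter_insert]
  split
  · rw [Finset.card_insert_of_notMem (by simp [Finset.mem_Icc])]
  · simp

lemma pcnt_mono {i j : ℕ} (h : i ≤ j) : pcnt w b i ≤ pcnt w b j := by
  apply Finset.card_le_card
  apply Finset.filter_subset_filter
  intro x hx
  simp only [Finset.mem_Icc] at *
  omega

lemma pcnt_le_add {i j : ℕ} (h : i ≤ j) : pcnt w b j ≤ pcnt w b i + (j - i) := by
  induction j with
  | zero =>
    have : i = 0 := by omega
    subst this
    simp
  | succ k ih =>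
    rcases Nat.lt_or_ge i (k+1) with hik | hik
    · have := ih (by omega)
      rw [pcnt_succ]
      split <;> omega
    · have : i = k + 1 := by omega
      subst this; omega

lemma pcnt_add_pcnt (i : ℕ) : pcnt w true i + pcnt w false i = i := by
  unfold pcnt
  have h := Finset.card_filter_add_card_filter_not (s := Finset.Icc 1 i)
    (p := fun j => ltr w j = true)
  have h2 : (Finset.Icc 1 i).filter (fun j => ¬ (ltr w j = true)) =
      (Finset.Icc 1 i).filter (fun j => ltr w j = false) := by
    apply Finset.filter_congr
    intro x _
    cases hx : ltr w x <;> simp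
  rw [h2, Nat.card_Icc] at h
  omega

lemma ltr_eq_of_pcnt_succ {i : ℕ} (h : pcnt w b (i + 1) = pcnt w b i + 1) :
    ltr w (i + 1) = b := by
  rw [pcnt_succ] at h
  by_contra hc
  simp [hc] at h

lemma pcnt_letter {i : ℕ} (hi : 1 ≤ i) (h : ltr w i = b) :
    pcnt w b i = pcnt w b (i - 1) + 1 := by
  obtain ⟨j, rfl⟩ : ∃ j, i = j + 1 := ⟨i - 1, by omega⟩
  rw [pcnt_succ]
  simp [h]

lemma exists_occ {c i : ℕ} (hc : 1 ≤ c) (h : c ≤ pcnt w b i) :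
    ∃ q, 1 ≤ q ∧ q ≤ i ∧ ltr w q = b ∧ pcnt w b q = c := by
  induction i with
  | zero => rw [pcnt_zero] at h; omega
  | succ k ih =>
    rcases Nat.lt_or_ge (pcnt w b k) c with hk | hk
    · have hs := pcnt_succ (w := w) (b := b) (i := k)
      have hl : ltr w (k+1) = b := by
        by_contra hc2
        rw [if_neg hc2] at hs
        omega
      rw [if_pos hl] at hs
      exact ⟨k+1, by omega, le_refl _, hl, by omega⟩
    · obtain ⟨q, h1, h2, h3, h4⟩ := ih hk
      exact ⟨q, h1, by omega, h3, h4⟩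

lemma occPos_spec {c q : ℕ} (hq1 : 1 ≤ q) (hqm : q ≤ m) (hl : ltr w q = b)
    (hc : pcnt w b q = c) : occPos w b c = q := by
  have hsingle : ((Finset.Icc 1 m).filter fun i => ltr w i = b ∧ pcnt w b i = c) = {q} := by
    ext x
    simp only [Finset.mem_filter, Finset.mem_Icc, Finset.mem_singleton]
    constructor
    · rintro ⟨⟨hx1, hxm⟩, hxl, hxc⟩
      by_contra hne
      rcases Nat.lt_or_ge x q with hlt | hge
      · have := pcnt_letter hq1 hl
        have := pcnt_mono (b := b) (w := w) (show x ≤ q - 1 by omega)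
        omega
      · have hxq : q < x := by omega
        have := pcnt_letter hx1 hxl
        have := pcnt_mono (b := b) (w := w) (show q ≤ x - 1 by omega)
        omega
    · rintro rfl
      exact ⟨⟨hq1, hqm⟩, hl, hc⟩
  rw [occPos, hsingle]
  simp

lemma occPos_exists {c : ℕ} (hc : 1 ≤ c) (h : c ≤ pcnt w b m) :
    1 ≤ occPos w b c ∧ occPos w b c ≤ m ∧ ltr w (occPos w b c) = b ∧
      pcnt w b (occPos w b c) = c := by
  obtain ⟨q, h1, h2, h3, h4⟩ := exists_occ hc h
  rw [occPos_spec h1 h2 h3 h4]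
  exact ⟨h1, h2, h3, h4⟩

lemma card_filter_count {x y : ℕ} (hxy : x ≤ y) (hy : y ≤ pcnt w b m) :
    (((Finset.Icc 1 m)).filter fun p => ltr w p = b ∧ x < pcnt w b p ∧ pcnt w b p ≤ y).card
      = y - x := by
  have : y - x = (Finset.Icc (x+1) y).card := by rw [Nat.card_Icc]; omega
  rw [this]
  apply Finset.card_bij (fun p _ => pcnt w b p)
  · rintro p hp
    simp only [Finset.mem_filter, Finset.mem_Icc] at *
    omega
  · rintro p hp p' hp' hpp
    simp only [Finset.mem_filter, Finset.mem_Icc] at hp hp'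
    obtain ⟨⟨hp1, hpm⟩, hpl, hpc⟩ := hp
    obtain ⟨⟨hp'1, hp'm⟩, hp'l, hp'c⟩ := hp'
    by_contra hne
    rcases Nat.lt_or_ge p p' with hlt | hge
    · have := pcnt_letter hp'1 hp'l
      have := pcnt_mono (b := b) (w := w) (show p ≤ p' - 1 by omega)
      omega
    · have hxq : p' < p := by omega
      have := pcnt_letter hp1 hpl
      have := pcnt_mono (b := b) (w := w) (show p' ≤ p - 1 by omega)
      omega
  · rintro c hc
    simp only [Finset.mem_Icc] at hc
    obtain ⟨q, h1, h2, h3, h4⟩ := exists_occ (b := b) (w := w) (i := m)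
      (show 1 ≤ c by omega) (show c ≤ pcnt w b m by omega)
    exact ⟨q, by simp only [Finset.mem_filter, Finset.mem_Icc]; refine ⟨⟨h1, h2⟩, h3, by omega⟩, h4⟩

end basiclem
section basiclem2
variable {m : ℕ} {w : Fin m → Bool} {b : Bool}

lemma ltr_range {i : ℕ} (h : ltr w i = true) : 1 ≤ i ∧ i ≤ m := by
  by_contra hc
  rw [ltr, dif_neg hc] at h
  exact Bool.false_ne_true h

lemma pcnt_true_stable {i : ℕ} (h : m ≤ i) : pcnt w true i = pcnt w true m := by
  unfold pcnt
  congr 1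
  ext j
  simp only [Finset.mem_filter, Finset.mem_Icc]
  constructor
  · rintro ⟨⟨h1, h2⟩, h3⟩
    exact ⟨⟨h1, (ltr_range h3).2⟩, h3⟩
  · rintro ⟨⟨h1, h2⟩, h3⟩
    exact ⟨⟨h1, by omega⟩, h3⟩

lemma occPos_true_lt_false {n : ℕ} {W : Fin (2 * n) → Bool} (hW : IsDyck n W) {c : ℕ}
    (h1 : 1 ≤ c) (h2 : c ≤ n) : occPos W true c < occPos W false c := by
  have htot : pcnt W true (2 * n) = n := hW.1
  have hftot : pcnt W false (2 * n) = n := by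
    have := pcnt_add_pcnt (w := W) (2 * n); omega
  obtain ⟨hq1, hq2, hq3, hq4⟩ := occPos_exists (w := W) (b := false) h1 (by omega)
  set q := occPos W false c with hqdef
  have hle : c ≤ pcnt W true q := le_trans (le_of_eq hq4.symm) (hW.2 q hq2)
  obtain ⟨p, hp1, hp2, hp3, hp4⟩ := exists_occ (w := W) (b := true) h1 hle
  rw [occPos_spec hp1 (le_trans hp2 hq2) hp3 hp4]
  rcases Nat.lt_or_ge p q with h | h
  · exact h
  · have : p = q := by omega
    rw [this] at hp3
    rw [hp3] at hq3
    exact absurd hq3 (by simp)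

end basiclem2
section nthF

/-- The `r`-th smallest element (1-indexed) of a finite set of naturals. -/
def nthF (A : Finset ℕ) (r : ℕ) : ℕ := (A.sort (· ≤ ·)).getD (r - 1) 0

lemma nthF_eq_orderEmb (A : Finset ℕ) {c r : ℕ} (hA : A.card = c) (hr1 : 1 ≤ r)
    (hr : r ≤ c) : nthF A r = A.orderEmbOfFin hA ⟨r - 1, by omega⟩ := by
  rw [Finset.orderEmbOfFin_apply, nthF]
  have hlen : r - 1 < (A.sort (· ≤ ·)).length := by
    rw [Finset.length_sort]; omega
  rw [List.getD_eq_getElem _ _ hlen]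
  rfl

lemma nthF_mem {A : Finset ℕ} {r : ℕ} (hr1 : 1 ≤ r) (hr : r ≤ A.card) : nthF A r ∈ A := by
  rw [nthF_eq_orderEmb A rfl hr1 hr]
  exact Finset.orderEmbOfFin_mem _ _ _

lemma nthF_lt_nthF {A : Finset ℕ} {r r' : ℕ} (hr1 : 1 ≤ r) (hrr : r < r')
    (hr' : r' ≤ A.card) : nthF A r < nthF A r' := by
  rw [nthF_eq_orderEmb A rfl hr1 (by omega), nthF_eq_orderEmb A rfl (by omega) hr']
  exact (Finset.orderEmbOfFin A rfl).strictMono (by simp [Fin.lt_def]; omega)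

lemma card_filter_le_nthF {A : Finset ℕ} {r : ℕ} (hr1 : 1 ≤ r) (hr : r ≤ A.card) :
    (A.filter (· ≤ nthF A r)).card = r := by
  have hA : A.card = A.card := rfl
  have key : A.filter (· ≤ nthF A r) = (Finset.range r).image (fun j => nthF A (j + 1)) := by
    ext x
    simp only [Finset.mem_filter, Finset.mem_image, Finset.mem_range]
    constructor
    · rintro ⟨hxA, hxle⟩
      obtain ⟨i, hi⟩ : ∃ i : Fin A.card, (A.orderIsoOfFin hA i : ℕ) = x :=
        ⟨(A.orderIsoOfFin hA).symm ⟨x, hxA⟩, by simp⟩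
      refine ⟨i, ?_, ?_⟩
      · by_contra hge
        have h1 : (r : ℕ) - 1 < (i : ℕ) := by omega
        have h2 : nthF A r < (A.orderIsoOfFin hA i : ℕ) := by
          rw [nthF_eq_orderEmb A hA hr1 hr, ← Finset.coe_orderIsoOfFin_apply]
          have := (A.orderIsoOfFin hA).strictMono
            (show (⟨r - 1, by omega⟩ : Fin A.card) < i by simp [Fin.lt_def]; omega)
          exact_mod_cast this
        omega
      · rw [nthF_eq_orderEmb A hA (by omega) (by omega), ← Finset.coe_orderIsoOfFin_apply]
        have hcast : (⟨(i : ℕ) + 1 - 1, by omega⟩ : Fin A.card) = i := by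
          apply Fin.ext; simp
        rw [hcast, hi]
    · rintro ⟨j, hj, rfl⟩
      refine ⟨nthF_mem (by omega) (by omega), ?_⟩
      rcases Nat.lt_or_ge (j + 1) r with h | h
      · exact le_of_lt (nthF_lt_nthF (by omega) h hr)
      · have : j + 1 = r := by omega
        rw [this]
  rw [key, Finset.card_image_of_injOn, Finset.card_range]
  intro a ha b hb hab
  simp only [Finset.mem_coe, Finset.mem_range] at ha hb
  by_contra hne
  rcases Nat.lt_or_ge a b with h | h
  · exact absurd hab (Nat.ne_of_lt (nthF_lt_nthF (by omega) (by omega) (by omega)))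
  · exact absurd hab.symm (Nat.ne_of_lt (nthF_lt_nthF (by omega) (by omega) (by omega)))

lemma filter_le_nthF_succ {A : Finset ℕ} {r : ℕ} (hr1 : 1 ≤ r) (hr : r + 1 ≤ A.card) :
    A.filter (· ≤ nthF A (r + 1)) = insert (nthF A (r + 1)) (A.filter (· ≤ nthF A r)) := by
  have hlt : nthF A r < nthF A (r + 1) := nthF_lt_nthF hr1 (by omega) hr
  symm
  apply Finset.eq_of_subset_of_card_le
  · intro x hx
    simp only [Finset.mem_insert, Finset.mem_filter] at hx ⊢
    rcases hx with rfl | ⟨hxA, hxle⟩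
    · exact ⟨nthF_mem (by omega) hr, le_refl _⟩
    · exact ⟨hxA, by omega⟩
  · rw [Finset.card_insert_of_notMem (by simp only [Finset.mem_filter]; omega),
      card_filter_le_nthF hr1 (by omega), card_filter_le_nthF (by omega) hr]

lemma nthF_unique {A : Finset ℕ} {c : ℕ} (hA : A.card = c) {ψ : ℕ → ℕ} {t : ℕ}
    (hmem : ∀ r, 1 ≤ r → r ≤ c → ψ (t + r) ∈ A)
    (hmono : ∀ r r', 1 ≤ r → r < r' → r' ≤ c → ψ (t + r) < ψ (t + r'))
    {r : ℕ} (hr1 : 1 ≤ r) (hr : r ≤ c) : ψ (t + r) = nthF A r := by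
  have hfeq : (fun x : Fin c => ψ (t + ((x : ℕ) + 1))) = A.orderEmbOfFin hA := by
    apply Finset.orderEmbOfFin_unique hA
    · intro x
      exact hmem _ (by omega) (by omega)
    · intro x y hxy
      exact hmono _ _ (by omega) (by simp only [Fin.lt_def] at hxy; omega) (by omega)
  have := congrFun hfeq ⟨r - 1, by omega⟩
  simp only at this
  rw [nthF_eq_orderEmb A hA hr1 hr, ← this]
  congr 1
  omega

end nthF

section segments

/-- Left endpoint of the segment of `i` determined by `S`. -/
def segL (S : Finset ℕ) (i : ℕ) : ℕ := Nat.findGreatest (· ∈ S) (i - 1)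

/-- Right endpoint of the segment of `i` determined by `S` (and `2n`). -/
noncomputable def segR (n : ℕ) (S : Finset ℕ) (i : ℕ) : ℕ :=
  sInf {s : ℕ | (s ∈ S ∨ s = 2 * n) ∧ i ≤ s}

variable {n : ℕ} {S : Finset ℕ} {i : ℕ}

lemma segL_lt (hi : 1 ≤ i) : segL S i < i :=
  lt_of_le_of_lt (Nat.findGreatest_le _) (by omega)

lemma segL_mem : segL S i = 0 ∨ segL S i ∈ S := by
  rcases eq_or_ne (segL S i) 0 with h | h
  · exact Or.inl h
  · exact Or.inr (Nat.findGreatest_of_ne_zero rfl h)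

lemma segL_notin {j : ℕ} (h1 : segL S i < j) (h2 : j < i) : j ∉ S :=
  Nat.findGreatest_is_greatest h1 (by omega)

lemma segL_ge {j : ℕ} (hj : j ∈ S) (hji : j < i) : j ≤ segL S i :=
  Nat.le_findGreatest (by omega) hj

lemma segR_mem (hi : i ≤ 2 * n) :
    (segR n S i ∈ S ∨ segR n S i = 2 * n) ∧ i ≤ segR n S i := by
  have hne : {s : ℕ | (s ∈ S ∨ s = 2 * n) ∧ i ≤ s}.Nonempty := ⟨2 * n, Or.inr rfl, hi⟩
  have := Nat.sInf_mem hne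
  simpa [segR] using this

lemma segR_le_two_n (hi : i ≤ 2 * n) : segR n S i ≤ 2 * n :=
  Nat.sInf_le ⟨Or.inr rfl, hi⟩

lemma segR_le {j : ℕ} (hj : j ∈ S) (hij : i ≤ j) : segR n S i ≤ j :=
  Nat.sInf_le ⟨Or.inl hj, hij⟩

lemma segR_notin {j : ℕ} (h1 : i ≤ j) (h2 : j < segR n S i) : j ∉ S := by
  intro hj
  exact Nat.notMem_of_lt_sInf h2 ⟨Or.inl hj, h1⟩

lemma seg_eq {j : ℕ}
    (hi2 : i ≤ 2 * n) (hj1 : segL S i < j) (hj2 : j ≤ segR n S i) :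
    segL S j = segL S i ∧ segR n S j = segR n S i := by
  have hij_or : i ≤ segR n S i := (segR_mem hi2).2
  have hj2n : j ≤ 2 * n := le_trans hj2 (segR_le_two_n hi2)
  constructor
  · apply le_antisymm
    · -- segL S j ≤ segL S i
      rcases segL_mem (S := S) (i := j) with h0 | hmem
      · rw [h0]; omega
      · by_contra hgt
        push_neg at hgt
        have hlt : segL S j < j := segL_lt (by omega)
        rcases Nat.lt_or_ge (segL S j) i with hc | hc
        · exact segL_notin (show segL S i < segL S j by omega) hc hmem
        · exact segR_notin (n := n) hc (by omega) hmem
    · rcases segL_mem (S := S) (i := i) with h0 | hmem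
      · rw [h0]; omega
      · exact segL_ge hmem (by omega)
  · have hji : i ≤ segR n S j := by
      by_contra hc
      push_neg at hc
      have h1 : segL S i < segR n S j := lt_of_lt_of_le hj1 (segR_mem hj2n).2
      rcases (segR_mem hj2n).1 with hmem | h2n
      · exact segL_notin h1 hc hmem
      · omega
    apply le_antisymm
    · rcases (segR_mem hi2).1 with hmem | h2n
      · exact Nat.sInf_le ⟨Or.inl hmem, hj2⟩
      · exact Nat.sInf_le ⟨Or.inr h2n, hj2⟩
    · rcases (segR_mem hj2n).1 with hmem | h2n
      · exact Nat.sInf_le ⟨Or.inl hmem, hji⟩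
      · exact Nat.sInf_le ⟨Or.inr h2n, hji⟩

lemma segL_succ_self (hmem : i ∈ S ∨ i = 0) : segL S (i + 1) = i := by
  apply le_antisymm
  · simpa [segL] using Nat.findGreatest_le i
  · rcases hmem with h | h
    · exact segL_ge h (by omega)
    · omega

lemma segR_self (hmem : i ∈ S ∨ i = 2 * n) (hi : i ≤ 2 * n) : segR n S i = i :=
  le_antisymm (Nat.sInf_le ⟨hmem, le_refl _⟩) (segR_mem hi).2

end segments
section construction

/-- Extension of prefix-count data `f` on `S` to `{0} ∪ S ∪ {2n}`. -/
def Fx (n : ℕ) (S : Finset ℕ) (f : ℕ → ℕ) : ℕ → ℕ :=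
  fun i => if i ∈ S then f i else if 2 * n ≤ i then n else 0

/-- Admissibility of prefix-count data. -/
def OkF (n : ℕ) (S : Finset ℕ) (f : ℕ → ℕ) : Prop :=
  (∀ i, i ∉ S → f i = 0) ∧
  (∀ s ∈ insert 0 (insert (2 * n) S), s ≤ 2 * Fx n S f s) ∧
  (∀ s ∈ insert 0 (insert (2 * n) S), ∀ s' ∈ insert 0 (insert (2 * n) S), s ≤ s' →
    Fx n S f s ≤ Fx n S f s' ∧ Fx n S f s' ≤ Fx n S f s + (s' - s))

variable {n : ℕ} {W : Fin (2 * n) → Bool} {S : Finset ℕ} {f : ℕ → ℕ}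

lemma Fx_zero (hS : S ⊆ Finset.Icc 1 (2 * n - 1)) (hn : 0 < n) : Fx n S f 0 = 0 := by
  have h0 : 0 ∉ S := fun h => by have := hS h; simp [Finset.mem_Icc] at this
  unfold Fx
  rw [if_neg h0, if_neg (by omega)]

lemma Fx_two_n (hS : S ⊆ Finset.Icc 1 (2 * n - 1)) (hn : 0 < n) : Fx n S f (2 * n) = n := by
  have h0 : 2 * n ∉ S := fun h => by
    have := hS h; simp [Finset.mem_Icc] at this; omega
  simp [Fx, h0]

lemma Fx_mem (hs : s ∈ S) : Fx n S f s = f s := by simp [Fx, hs]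

lemma seg_facts (hS : S ⊆ Finset.Icc 1 (2 * n - 1)) (hn : 0 < n) (hf : OkF n S f)
    {t u : ℕ} (ht : t ∈ insert 0 (insert (2 * n) S)) (hu : u ∈ insert 0 (insert (2 * n) S))
    (htu : t ≤ u) :
    Fx n S f t ≤ Fx n S f u ∧ Fx n S f u ≤ Fx n S f t + (u - t) ∧
    Fx n S f t ≤ t ∧ Fx n S f u ≤ u ∧ t ≤ 2 * Fx n S f t ∧ u ≤ 2 * Fx n S f u ∧
    Fx n S f u ≤ n ∧ u - Fx n S f u ≤ n ∧ u ≤ 2 * n := by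
  obtain ⟨hz, hd, hp⟩ := hf
  have h0E : (0 : ℕ) ∈ insert 0 (insert (2 * n) S) := by simp
  have h2E : 2 * n ∈ insert 0 (insert (2 * n) S) := by simp
  have hu2n : u ≤ 2 * n := by
    rcases Finset.mem_insert.mp hu with h | h
    · omega
    rcases Finset.mem_insert.mp h with h | h
    · omega
    · have := hS h; simp [Finset.mem_Icc] at this; omega
  have h1 := hp t ht u hu htu
  have h2 := hp 0 h0E t ht (by omega)
  have h3 := hp u hu (2 * n) h2E hu2n
  have h4 := hd t ht
  have h5 := hd u hu
  rw [Fx_zero hS hn] at h2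
  rw [Fx_two_n hS hn] at h3
  refine ⟨h1.1, h1.2, by omega, by omega, h4, h5, by omega, by omega, hu2n⟩

/-- W-positions of the letters used in the segment of `i`. -/
noncomputable def Qset (n : ℕ) (W : Fin (2 * n) → Bool) (S : Finset ℕ) (f : ℕ → ℕ) (i : ℕ) : Finset ℕ :=
  (Finset.Icc 1 (2 * n)).filter (fun p =>
    (ltr W p = true ∧ Fx n S f (segL S i) < pcnt W true p ∧
      pcnt W true p ≤ Fx n S f (segR n S i)) ∨
    (ltr W p = false ∧ segL S i - Fx n S f (segL S i) < pcnt W false p ∧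
      pcnt W false p ≤ segR n S i - Fx n S f (segR n S i)))

noncomputable def qpos (n : ℕ) (W : Fin (2 * n) → Bool) (S : Finset ℕ) (f : ℕ → ℕ)
    (i : ℕ) : ℕ := nthF (Qset n W S f i) (i - segL S i)

noncomputable def mkWord (n : ℕ) (W : Fin (2 * n) → Bool) (S : Finset ℕ) (f : ℕ → ℕ) :
    Fin (2 * n) → Bool := fun j => ltr W (qpos n W S f (j.val + 1))

lemma segL_mem_E {i : ℕ} : segL S i ∈ insert 0 (insert (2 * n) S) := by
  rcases segL_mem (S := S) (i := i) with h | h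
  · simp [h]
  · simp [h]

lemma segR_mem_E {i : ℕ} (hi : i ≤ 2 * n) : segR n S i ∈ insert 0 (insert (2 * n) S) := by
  rcases (segR_mem (S := S) hi).1 with h | h
  · simp [h]
  · simp [h]

lemma card_Qset (hS : S ⊆ Finset.Icc 1 (2 * n - 1)) (hn : 0 < n) (hW : IsDyck n W)
    (hf : OkF n S f) {i : ℕ} (hi1 : 1 ≤ i) (hi2 : i ≤ 2 * n) :
    (Qset n W S f i).card = segR n S i - segL S i := by
  have htu : segL S i ≤ segR n S i := le_trans (le_of_lt (segL_lt hi1)) (segR_mem hi2).2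
  obtain ⟨m1, m2, m3, m4, m5, m6, m7, m8, m9⟩ :=
    seg_facts hS hn hf (segL_mem_E (i := i)) (segR_mem_E hi2) htu
  have htot : pcnt W true (2 * n) = n := hW.1
  have hftot : pcnt W false (2 * n) = n := by
    have := pcnt_add_pcnt (w := W) (2 * n); omega
  unfold Qset
  rw [Finset.filter_or, Finset.card_union_of_disjoint]
  · have c1 : ((Finset.Icc 1 (2 * n)).filter (fun p => ltr W p = true ∧
        Fx n S f (segL S i) < pcnt W true p ∧ pcnt W true p ≤ Fx n S f (segR n S i))).card
        = Fx n S f (segR n S i) - Fx n S f (segL S i) := card_filter_count m1 (by omega)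
    have c2 : ((Finset.Icc 1 (2 * n)).filter (fun p => ltr W p = false ∧
        segL S i - Fx n S f (segL S i) < pcnt W false p ∧
          pcnt W false p ≤ segR n S i - Fx n S f (segR n S i))).card
        = (segR n S i - Fx n S f (segR n S i)) - (segL S i - Fx n S f (segL S i)) :=
      card_filter_count (by omega) (by omega)
    rw [c1, c2]
    omega
  · rw [Finset.disjoint_filter]
    rintro x _ ⟨hx, _⟩ ⟨hx', _⟩
    rw [hx] at hx'
    exact absurd hx' (by simp)

lemma qpos_mem (hS : S ⊆ Finset.Icc 1 (2 * n - 1)) (hn : 0 < n) (hW : IsDyck n W)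
    (hf : OkF n S f) {i : ℕ} (hi1 : 1 ≤ i) (hi2 : i ≤ 2 * n) :
    qpos n W S f i ∈ Qset n W S f i := by
  apply nthF_mem
  · have := segL_lt (S := S) hi1; omega
  · rw [card_Qset hS hn hW hf hi1 hi2]
    have := (segR_mem (S := S) hi2).2
    have := segL_lt (S := S) hi1
    omega

lemma qpos_range (hS : S ⊆ Finset.Icc 1 (2 * n - 1)) (hn : 0 < n) (hW : IsDyck n W)
    (hf : OkF n S f) {i : ℕ} (hi1 : 1 ≤ i) (hi2 : i ≤ 2 * n) :
    1 ≤ qpos n W S f i ∧ qpos n W S f i ≤ 2 * n := by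
  have := qpos_mem hS hn hW hf hi1 hi2
  rw [Qset, Finset.mem_filter, Finset.mem_Icc] at this
  exact this.1

lemma ltr_mkWord {i : ℕ} (hi1 : 1 ≤ i) (hi2 : i ≤ 2 * n) :
    ltr (mkWord n W S f) i = ltr W (qpos n W S f i) := by
  rw [ltr, dif_pos ⟨hi1, hi2⟩, mkWord]
  show ltr W (qpos n W S f (i - 1 + 1)) = ltr W (qpos n W S f i)
  congr 2
  omega

lemma Qset_congr {i j : ℕ} (hL : segL S j = segL S i) (hR : segR n S j = segR n S i) :
    Qset n W S f j = Qset n W S f i := by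
  unfold Qset
  rw [hL, hR]

end construction
section counting

variable {n : ℕ} {W : Fin (2 * n) → Bool} {S : Finset ℕ} {f : ℕ → ℕ}

lemma card_Qset_true (hS : S ⊆ Finset.Icc 1 (2 * n - 1)) (hn : 0 < n) (hW : IsDyck n W)
    (hf : OkF n S f) {i : ℕ} (hi1 : 1 ≤ i) (hi2 : i ≤ 2 * n) :
    ((Qset n W S f i).filter (fun p => ltr W p = true)).card
      = Fx n S f (segR n S i) - Fx n S f (segL S i) := by
  have htu : segL S i ≤ segR n S i := le_trans (le_of_lt (segL_lt hi1)) (segR_mem hi2).2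
  obtain ⟨m1, m2, m3, m4, m5, m6, m7, m8, m9⟩ :=
    seg_facts hS hn hf (segL_mem_E (i := i)) (segR_mem_E hi2) htu
  have key : (Qset n W S f i).filter (fun p => ltr W p = true)
      = (Finset.Icc 1 (2 * n)).filter (fun p => ltr W p = true ∧
          Fx n S f (segL S i) < pcnt W true p ∧ pcnt W true p ≤ Fx n S f (segR n S i)) := by
    ext p
    simp only [Qset, Finset.mem_filter, Finset.mem_Icc]
    constructor
    · rintro ⟨⟨hpI, hd⟩, hpb⟩
      rcases hd with ⟨_, h1, h2⟩ | ⟨hf2, _⟩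
      · exact ⟨hpI, hpb, h1, h2⟩
      · rw [hpb] at hf2; exact absurd hf2 (by simp)
    · rintro ⟨hpI, hpb, h1, h2⟩
      exact ⟨⟨hpI, Or.inl ⟨hpb, h1, h2⟩⟩, hpb⟩
  rw [key, card_filter_count m1 (by rw [hW.1]; omega)]

lemma seg_end_count (hS : S ⊆ Finset.Icc 1 (2 * n - 1)) (hn : 0 < n) (hW : IsDyck n W)
    (hf : OkF n S f) {j : ℕ} (hj1 : 1 ≤ j) (hj2 : j ≤ 2 * n) (hjR : segR n S j = j)
    (hPj : pcnt (mkWord n W S f) true j = Fx n S f (segL S j) +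
      (((Qset n W S f j).filter (· ≤ qpos n W S f j)).filter (fun p => ltr W p = true)).card) :
    pcnt (mkWord n W S f) true j = Fx n S f j := by
  have htL : segL S j < j := segL_lt hj1
  have hcard : (Qset n W S f j).card = j - segL S j := by
    rw [card_Qset hS hn hW hf hj1 hj2, hjR]
  have hfull : (Qset n W S f j).filter (· ≤ qpos n W S f j) = Qset n W S f j := by
    apply Finset.eq_of_subset_of_card_le (Finset.filter_subset _ _)
    rw [hcard]
    rw [qpos, card_filter_le_nthF (by omega) (by omega)]
  rw [hPj, hfull, card_Qset_true hS hn hW hf hj1 hj2, hjR]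
  have := (seg_facts hS hn hf (segL_mem_E (i := j)) (segR_mem_E hj2)
    (le_trans (le_of_lt htL) (segR_mem hj2).2)).1
  rw [hjR] at this
  omega

lemma count_mkWord (hS : S ⊆ Finset.Icc 1 (2 * n - 1)) (hn : 0 < n) (hW : IsDyck n W)
    (hf : OkF n S f) :
    ∀ i, 1 ≤ i → i ≤ 2 * n →
      pcnt (mkWord n W S f) true i = Fx n S f (segL S i) +
        (((Qset n W S f i).filter (· ≤ qpos n W S f i)).filter
          (fun p => ltr W p = true)).card := by
  intro i
  induction i using Nat.strong_induction_on with
  | _ i IH =>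
  intro hi1 hi2
  have htL : segL S i < i := segL_lt hi1
  have hiR : i ≤ segR n S i := (segR_mem hi2).2
  have hcard : (Qset n W S f i).card = segR n S i - segL S i := card_Qset hS hn hW hf hi1 hi2
  have hstep : pcnt (mkWord n W S f) true i =
      pcnt (mkWord n W S f) true (i - 1) +
        (if ltr (mkWord n W S f) i = true then 1 else 0) := by
    have h := pcnt_succ (w := mkWord n W S f) (b := true) (i := i - 1)
    rw [show i - 1 + 1 = i by omega] at h
    exact h
  have hltr : ltr (mkWord n W S f) i = ltr W (qpos n W S f i) := ltr_mkWord hi1 hi2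
  rcases eq_or_lt_of_le (show segL S i ≤ i - 1 by omega) with hA | hB
  · -- segment start : i - 1 = segL S i
    have hprev : pcnt (mkWord n W S f) true (i - 1) = Fx n S f (segL S i) := by
      rcases segL_mem (S := S) (i := i) with h0 | hmem
      · rw [← hA, h0, pcnt_zero, Fx_zero hS hn]
      · have hjmem : i - 1 ∈ S := by rw [hA] at hmem; exact hmem
        have hj1 : 1 ≤ i - 1 := by
          have := hS hjmem; simp [Finset.mem_Icc] at this; omega
        have hP := IH (i - 1) (by omega) hj1 (by omega)
        have hend := seg_end_count hS hn hW hf hj1 (by omega)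
          (segR_self (Or.inl hjmem) (by omega)) hP
        rw [hA]
        exact hend
    have hsing : (Qset n W S f i).filter (· ≤ qpos n W S f i) = {qpos n W S f i} := by
      symm
      apply Finset.eq_of_subset_of_card_le
      · rw [Finset.singleton_subset_iff, Finset.mem_filter]
        exact ⟨qpos_mem hS hn hW hf hi1 hi2, le_refl _⟩
      · rw [qpos, card_filter_le_nthF (by omega) (by omega), Finset.card_singleton]
        omega
    rw [hstep, hprev, hltr, hsing, Finset.filter_singleton]
    by_cases hb : ltr W (qpos n W S f i) = true
    · rw [if_pos hb, if_pos hb, Finset.card_singleton]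
    · rw [if_neg hb, if_neg hb, Finset.card_empty]
  · -- interior of segment : segL S i < i - 1
    have hseg := seg_eq (S := S) (i := i) hi2 hB (by omega)
    have hQ : Qset n W S f (i - 1) = Qset n W S f i := Qset_congr hseg.1 hseg.2
    have hqprev : qpos n W S f (i - 1) = nthF (Qset n W S f i) (i - 1 - segL S i) := by
      rw [qpos, hQ, hseg.1]
    have hP := IH (i - 1) (by omega) (by omega) (by omega)
    rw [hseg.1, hQ, hqprev] at hP
    have hins : (Qset n W S f i).filter (· ≤ qpos n W S f i)
        = insert (qpos n W S f i)
            ((Qset n W S f i).filter (· ≤ nthF (Qset n W S f i) (i - 1 - segL S i))) := by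
      have h := filter_le_nthF_succ (A := Qset n W S f i) (r := i - 1 - segL S i)
        (by omega) (by omega)
      rw [show i - 1 - segL S i + 1 = i - segL S i by omega] at h
      exact h
    have hqq : nthF (Qset n W S f i) (i - 1 - segL S i) < qpos n W S f i := by
      rw [qpos]
      exact nthF_lt_nthF (by omega) (by omega) (by omega)
    rw [hstep, hP, hltr, hins, Finset.filter_insert]
    by_cases hb : ltr W (qpos n W S f i) = true
    · rw [if_pos hb, if_pos hb, Finset.card_insert_of_notMem]
      · omega
      · rw [Finset.mem_filter, Finset.mem_filter]
        rintro ⟨⟨_, hle⟩, _⟩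
        omega
    · rw [if_neg hb, if_neg hb]
      omega

lemma count_end (hS : S ⊆ Finset.Icc 1 (2 * n - 1)) (hn : 0 < n) (hW : IsDyck n W)
    (hf : OkF n S f) {j : ℕ} (hj2 : j ≤ 2 * n) (hj : j ∈ S ∨ j = 2 * n ∨ j = 0) :
    pcnt (mkWord n W S f) true j = Fx n S f j := by
  rcases hj with hj | hj | hj
  · have hj1 : 1 ≤ j := by have := hS hj; simp [Finset.mem_Icc] at this; omega
    exact seg_end_count hS hn hW hf hj1 hj2 (segR_self (Or.inl hj) hj2)
      (count_mkWord hS hn hW hf j hj1 hj2)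
  · subst hj
    have hj1 : 1 ≤ 2 * n := by omega
    exact seg_end_count hS hn hW hf hj1 hj2 (segR_self (Or.inr rfl) hj2)
      (count_mkWord hS hn hW hf _ hj1 hj2)
  · subst hj
    rw [pcnt_zero, Fx_zero hS hn]

end counting
section properties

variable {n : ℕ} {W : Fin (2 * n) → Bool} {S : Finset ℕ} {f : ℕ → ℕ}

lemma Qset_bounds_true {i q : ℕ} (hq : q ∈ Qset n W S f i) (hb : ltr W q = true) :
    (1 ≤ q ∧ q ≤ 2 * n) ∧ Fx n S f (segL S i) < pcnt W true q ∧
      pcnt W true q ≤ Fx n S f (segR n S i) := by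
  simp only [Qset, Finset.mem_filter, Finset.mem_Icc] at hq
  obtain ⟨hq1, hbr⟩ := hq
  rcases hbr with ⟨_, h1, h2⟩ | ⟨hf2, _⟩
  · exact ⟨hq1, h1, h2⟩
  · rw [hb] at hf2; exact absurd hf2 (by simp)

lemma Qset_bounds_false {i q : ℕ} (hq : q ∈ Qset n W S f i) (hb : ltr W q = false) :
    (1 ≤ q ∧ q ≤ 2 * n) ∧ segL S i - Fx n S f (segL S i) < pcnt W false q ∧
      pcnt W false q ≤ segR n S i - Fx n S f (segR n S i) := by
  simp only [Qset, Finset.mem_filter, Finset.mem_Icc] at hq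
  obtain ⟨hq1, hbr⟩ := hq
  rcases hbr with ⟨hf2, _⟩ | ⟨_, h1, h2⟩
  · rw [hb] at hf2; exact absurd hf2 (by simp)
  · exact ⟨hq1, h1, h2⟩

lemma card_Qset_le_true (hW : IsDyck n W) {i q : ℕ}
    (hq : q ∈ Qset n W S f i) (hbq : ltr W q = true) :
    (((Qset n W S f i).filter (· ≤ q)).filter (fun p => ltr W p = true)).card
      = pcnt W true q - Fx n S f (segL S i) := by
  obtain ⟨⟨hq1, hq2⟩, hb1, hb2⟩ := Qset_bounds_true hq hbq
  have key : ((Qset n W S f i).filter (· ≤ q)).filter (fun p => ltr W p = true)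
      = (Finset.Icc 1 (2 * n)).filter (fun p => ltr W p = true ∧
          Fx n S f (segL S i) < pcnt W true p ∧ pcnt W true p ≤ pcnt W true q) := by
    ext p
    simp only [Qset, Finset.mem_filter, Finset.mem_Icc]
    constructor
    · rintro ⟨⟨⟨⟨hp1, hp2⟩, hbr⟩, hple⟩, hpb⟩
      rcases hbr with ⟨_, h1, _⟩ | ⟨hf2, _⟩
      · exact ⟨⟨hp1, hp2⟩, hpb, h1, pcnt_mono hple⟩
      · rw [hpb] at hf2; exact absurd hf2 (by simp)
    · rintro ⟨⟨hp1, hp2⟩, hpb, h1, h2⟩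
      have hple : p ≤ q := by
        by_contra hgt
        have := pcnt_letter (w := W) (b := true) hp1 hpb
        have := pcnt_mono (w := W) (b := true) (show q ≤ p - 1 by omega)
        omega
      exact ⟨⟨⟨⟨hp1, hp2⟩, Or.inl ⟨hpb, h1, le_trans h2 hb2⟩⟩, hple⟩, hpb⟩
  rw [key, card_filter_count (by omega) (pcnt_mono hq2)]

lemma card_Qset_le_false (hW : IsDyck n W) {i q : ℕ}
    (hq : q ∈ Qset n W S f i) (hbq : ltr W q = false) :
    (((Qset n W S f i).filter (· ≤ q)).filter (fun p => ltr W p = false)).card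
      = pcnt W false q - (segL S i - Fx n S f (segL S i)) := by
  obtain ⟨⟨hq1, hq2⟩, hb1, hb2⟩ := Qset_bounds_false hq hbq
  have hWf : pcnt W false (2 * n) = n := by
    have := pcnt_add_pcnt (w := W) (2 * n); have := hW.1; omega
  have key : ((Qset n W S f i).filter (· ≤ q)).filter (fun p => ltr W p = false)
      = (Finset.Icc 1 (2 * n)).filter (fun p => ltr W p = false ∧
          (segL S i - Fx n S f (segL S i)) < pcnt W false p ∧
            pcnt W false p ≤ pcnt W false q) := by
    ext p
    simp only [Qset, Finset.mem_filter, Finset.mem_Icc]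
    constructor
    · rintro ⟨⟨⟨⟨hp1, hp2⟩, hbr⟩, hple⟩, hpb⟩
      rcases hbr with ⟨hf2, _⟩ | ⟨_, h1, _⟩
      · rw [hpb] at hf2; exact absurd hf2 (by simp)
      · exact ⟨⟨hp1, hp2⟩, hpb, h1, pcnt_mono hple⟩
    · rintro ⟨⟨hp1, hp2⟩, hpb, h1, h2⟩
      have hple : p ≤ q := by
        by_contra hgt
        have := pcnt_letter (w := W) (b := false) hp1 hpb
        have := pcnt_mono (w := W) (b := false) (show q ≤ p - 1 by omega)
        omega
      exact ⟨⟨⟨⟨hp1, hp2⟩, Or.inr ⟨hpb, h1, le_trans h2 hb2⟩⟩, hple⟩, hpb⟩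
  rw [key, card_filter_count (by omega) (pcnt_mono hq2)]

lemma count_le_split (hS : S ⊆ Finset.Icc 1 (2 * n - 1)) (hn : 0 < n) (hW : IsDyck n W)
    (hf : OkF n S f) {i : ℕ} (hi1 : 1 ≤ i) (hi2 : i ≤ 2 * n) :
    (((Qset n W S f i).filter (· ≤ qpos n W S f i)).filter (fun p => ltr W p = true)).card +
    (((Qset n W S f i).filter (· ≤ qpos n W S f i)).filter (fun p => ltr W p = false)).card
      = i - segL S i := by
  have h := Finset.card_filter_add_card_filter_not
    (s := (Qset n W S f i).filter (· ≤ qpos n W S f i)) (p := fun p => ltr W p = true)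
  have h2 : ((Qset n W S f i).filter (· ≤ qpos n W S f i)).filter
      (fun p => ¬ (ltr W p = true)) = ((Qset n W S f i).filter (· ≤ qpos n W S f i)).filter
        (fun p => ltr W p = false) := by
    apply Finset.filter_congr
    intro x _
    cases hx : ltr W x <;> simp
  rw [h2] at h
  rw [h]
  have htL : segL S i < i := segL_lt hi1
  have hcard : (Qset n W S f i).card = segR n S i - segL S i := card_Qset hS hn hW hf hi1 hi2
  have hiR : i ≤ segR n S i := (segR_mem hi2).2
  rw [qpos, card_filter_le_nthF (by omega) (by omega)]

lemma pcnt_W_qpos_true (hS : S ⊆ Finset.Icc 1 (2 * n - 1)) (hn : 0 < n) (hW : IsDyck n W)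
    (hf : OkF n S f) {i : ℕ} (hi1 : 1 ≤ i) (hi2 : i ≤ 2 * n)
    (hb : ltr W (qpos n W S f i) = true) :
    pcnt W true (qpos n W S f i) = pcnt (mkWord n W S f) true i := by
  have h1 := count_mkWord hS hn hW hf i hi1 hi2
  have h2 := card_Qset_le_true (f := f) hW (qpos_mem hS hn hW hf hi1 hi2) hb
  have h3 := (Qset_bounds_true (f := f) (qpos_mem hS hn hW hf hi1 hi2) hb).2.1
  omega

lemma pcnt_W_qpos_false (hS : S ⊆ Finset.Icc 1 (2 * n - 1)) (hn : 0 < n) (hW : IsDyck n W)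
    (hf : OkF n S f) {i : ℕ} (hi1 : 1 ≤ i) (hi2 : i ≤ 2 * n)
    (hb : ltr W (qpos n W S f i) = false) :
    pcnt W false (qpos n W S f i) = pcnt (mkWord n W S f) false i := by
  have h1 := count_mkWord hS hn hW hf i hi1 hi2
  have h2 := card_Qset_le_false (f := f) hW (qpos_mem hS hn hW hf hi1 hi2) hb
  have h3 := (Qset_bounds_false (f := f) (qpos_mem hS hn hW hf hi1 hi2) hb).2.1
  have h4 := count_le_split hS hn hW hf hi1 hi2
  have h5 := pcnt_add_pcnt (w := mkWord n W S f) i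
  have h6 := (seg_facts hS hn hf (segL_mem_E (i := i)) (segR_mem_E hi2)
    (le_trans (le_of_lt (segL_lt hi1)) (segR_mem hi2).2)).2.2.1
  have htL : segL S i < i := segL_lt hi1
  omega

lemma occ_mkWord (hS : S ⊆ Finset.Icc 1 (2 * n - 1)) (hn : 0 < n) (hW : IsDyck n W)
    (hf : OkF n S f) {i : ℕ} (hi1 : 1 ≤ i) (hi2 : i ≤ 2 * n) :
    occPos W (ltr (mkWord n W S f) i)
        (pcnt (mkWord n W S f) (ltr (mkWord n W S f) i) i) = qpos n W S f i := by
  have hltr := ltr_mkWord (W := W) (S := S) (f := f) hi1 hi2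
  obtain ⟨hr1, hr2⟩ := qpos_range hS hn hW hf hi1 hi2
  cases hb : ltr W (qpos n W S f i) with
  | true =>
    rw [hltr, hb]
    exact occPos_spec hr1 hr2 hb (pcnt_W_qpos_true hS hn hW hf hi1 hi2 hb)
  | false =>
    rw [hltr, hb]
    exact occPos_spec hr1 hr2 hb (pcnt_W_qpos_false hS hn hW hf hi1 hi2 hb)

lemma mkWord_isDyck (hS : S ⊆ Finset.Icc 1 (2 * n - 1)) (hn : 0 < n) (hW : IsDyck n W)
    (hf : OkF n S f) : IsDyck n (mkWord n W S f) := by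
  have htotal : pcnt (mkWord n W S f) true (2 * n) = n := by
    rw [count_end hS hn hW hf (le_refl _) (Or.inr (Or.inl rfl)), Fx_two_n hS hn]
  refine ⟨htotal, ?_⟩
  intro i
  induction i with
  | zero => intro _; simp [pcnt_zero]
  | succ k ih =>
    intro hk2
    by_contra hc
    push_neg at hc
    have hk := ih (by omega)
    have hsf := pcnt_succ (w := mkWord n W S f) (b := false) (i := k)
    have hst := pcnt_succ (w := mkWord n W S f) (b := true) (i := k)
    have hbf : ltr (mkWord n W S f) (k + 1) = false := by
      cases hb : ltr (mkWord n W S f) (k + 1)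
      · rfl
      · rw [hb] at hsf hst; simp at hsf hst; omega
    rw [hbf] at hsf hst
    simp at hsf hst
    -- counts: pcnt false (k+1) = pcnt false k + 1 = pcnt true k + 1, pcnt true (k+1) = pcnt true k
    set c := pcnt (mkWord n W S f) false (k + 1) with hcdef
    have hceq : pcnt (mkWord n W S f) true (k + 1) = c - 1 ∧ 1 ≤ c := by omega
    have hi1 : 1 ≤ k + 1 := by omega
    have hbW : ltr W (qpos n W S f (k + 1)) = false := by
      rw [← ltr_mkWord (W := W) (S := S) (f := f) hi1 hk2]; exact hbf
    have hc0 : pcnt W false (qpos n W S f (k + 1)) = c :=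
      pcnt_W_qpos_false hS hn hW hf hi1 hk2 hbW
    obtain ⟨_, hb1, hb2⟩ := Qset_bounds_false (f := f) (qpos_mem hS hn hW hf hi1 hk2) hbW
    obtain ⟨m1, m2, m3, m4, m5, m6, m7, m8, m9⟩ :=
      seg_facts hS hn hf (segL_mem_E (i := k + 1)) (segR_mem_E hk2)
        (le_trans (le_of_lt (segL_lt hi1)) (segR_mem hk2).2)
    have hcn : c ≤ n := by omega
    have hcFu : c ≤ Fx n S f (segR n S (k + 1)) := by omega
    have hcu : pcnt (mkWord n W S f) true (segR n S (k + 1)) = Fx n S f (segR n S (k + 1)) := by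
      apply count_end hS hn hW hf m9
      rcases (segR_mem (S := S) hk2).1 with h | h
      · exact Or.inl h
      · exact Or.inr (Or.inl h)
    obtain ⟨j, hj1, hj2, hj3, hj4⟩ := exists_occ (w := mkWord n W S f) (b := true)
      (show 1 ≤ c by omega) (show c ≤ pcnt (mkWord n W S f) true (segR n S (k + 1)) by omega)
    have hjgt : k + 1 < j := by
      by_contra hle
      have := pcnt_mono (w := mkWord n W S f) (b := true) (show j ≤ k + 1 by omega)
      omega
    have hseg := seg_eq (S := S) (i := k + 1) hk2
      (show segL S (k + 1) < j by have := segL_lt (S := S) hi1; omega) hj2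
    have hcard : (Qset n W S f (k + 1)).card = segR n S (k + 1) - segL S (k + 1) :=
      card_Qset hS hn hW hf hi1 hk2
    have hsl : segL S (k + 1) < k + 1 := segL_lt (S := S) hi1
    have hqmono : qpos n W S f (k + 1) < qpos n W S f j := by
      rw [qpos, qpos, Qset_congr (f := f) hseg.1 hseg.2, hseg.1]
      exact nthF_lt_nthF (by omega) (by omega) (by omega)
    have hjn : j ≤ 2 * n := by omega
    have hbWj : ltr W (qpos n W S f j) = true := by
      rw [← ltr_mkWord (W := W) (S := S) (f := f) (by omega) hjn]; exact hj3
    have hc1 : pcnt W true (qpos n W S f j) = c := by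
      rw [pcnt_W_qpos_true hS hn hW hf (by omega) hjn hbWj, hj4]
    obtain ⟨hrj1, hrj2⟩ := qpos_range hS hn hW hf (show 1 ≤ j by omega) hjn
    obtain ⟨hri1, hri2⟩ := qpos_range hS hn hW hf hi1 hk2
    have hoccT : occPos W true c = qpos n W S f j := occPos_spec hrj1 hrj2 hbWj hc1
    have hoccF : occPos W false c = qpos n W S f (k + 1) := occPos_spec hri1 hri2 hbW hc0
    have := occPos_true_lt_false hW (show 1 ≤ c by omega) hcn
    omega

lemma mkWord_DW_subset (hS : S ⊆ Finset.Icc 1 (2 * n - 1)) (hn : 0 < n) (hW : IsDyck n W)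
    (hf : OkF n S f) : DWset W (mkWord n W S f) ⊆ S := by
  intro i hi
  simp only [DWset, Finset.mem_filter, Finset.mem_Icc] at hi
  obtain ⟨⟨hi1, hi2⟩, hlt⟩ := hi
  by_contra hiS
  have hi2n : i ≤ 2 * n := by omega
  have hi12n : i + 1 ≤ 2 * n := by omega
  rw [occ_mkWord hS hn hW hf (by omega) hi12n, occ_mkWord hS hn hW hf hi1 hi2n] at hlt
  have hR : i + 1 ≤ segR n S i := by
    have h1 := (segR_mem (S := S) hi2n).2
    rcases eq_or_lt_of_le h1 with h | h
    · exfalso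
      rcases (segR_mem (S := S) hi2n).1 with hm | hm
      · rw [← h] at hm; exact hiS hm
      · omega
    · omega
  have hseg := seg_eq (S := S) (i := i) hi2n
    (show segL S i < i + 1 by have := segL_lt (S := S) hi1; omega) hR
  have hcard : (Qset n W S f i).card = segR n S i - segL S i :=
    card_Qset hS hn hW hf hi1 hi2n
  have hsl : segL S i < i := segL_lt (S := S) hi1
  have : qpos n W S f i < qpos n W S f (i + 1) := by
    rw [qpos, qpos, Qset_congr (f := f) hseg.1 hseg.2, hseg.1]
    exact nthF_lt_nthF (by omega) (by omega) (by omega)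
  omega

end properties
section uniqueness

/-- W-position of the `i`-th letter of `w`. -/
noncomputable def occw {n : ℕ} (W w : Fin (2 * n) → Bool) (i : ℕ) : ℕ :=
  occPos W (ltr w i) (pcnt w (ltr w i) i)

variable {n : ℕ} {W w : Fin (2 * n) → Bool} {S : Finset ℕ}

/-- prefix-count data associated with a word. -/
def wf (S : Finset ℕ) (w : Fin (2 * n) → Bool) : ℕ → ℕ :=
  fun s => if s ∈ S then pcnt w true s else 0

lemma Fx_wf (hS : S ⊆ Finset.Icc 1 (2 * n - 1)) (hn : 0 < n) (hw : IsDyck n w)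
    {s : ℕ} (hs : s ∈ insert 0 (insert (2 * n) S)) :
    Fx n S (wf S w) s = pcnt w true s := by
  rcases Finset.mem_insert.mp hs with h | h
  · subst h; rw [Fx_zero hS hn, pcnt_zero]
  rcases Finset.mem_insert.mp h with h | h
  · subst h; rw [Fx_two_n hS hn, hw.1]
  · rw [Fx_mem h, wf, if_pos h]

lemma wf_ok (hS : S ⊆ Finset.Icc 1 (2 * n - 1)) (hn : 0 < n) (hw : IsDyck n w) :
    OkF n S (wf S w) := by
  refine ⟨fun i hi => by rw [wf, if_neg hi], ?_, ?_⟩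
  · intro s hs
    rw [Fx_wf hS hn hw hs]
    have hs2 : s ≤ 2 * n := by
      rcases Finset.mem_insert.mp hs with h | h
      · omega
      rcases Finset.mem_insert.mp h with h | h
      · omega
      · have := hS h; simp [Finset.mem_Icc] at this; omega
    have h1 := pcnt_add_pcnt (w := w) s
    have h2 := hw.2 s hs2
    omega
  · intro s hs s' hs' hss
    rw [Fx_wf hS hn hw hs, Fx_wf hS hn hw hs']
    exact ⟨pcnt_mono hss, pcnt_le_add hss⟩

lemma occw_spec (hW : IsDyck n W) (hw : IsDyck n w) {i : ℕ} (hi1 : 1 ≤ i) (hi2 : i ≤ 2 * n) :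
    (1 ≤ occw W w i ∧ occw W w i ≤ 2 * n) ∧ ltr W (occw W w i) = ltr w i ∧
      pcnt W (ltr w i) (occw W w i) = pcnt w (ltr w i) i := by
  have hc1 : 1 ≤ pcnt w (ltr w i) i := by
    have := pcnt_letter (w := w) hi1 (rfl : ltr w i = ltr w i)
    omega
  have hc2 : pcnt w (ltr w i) i ≤ pcnt W (ltr w i) (2 * n) := by
    cases hb : ltr w i with
    | true =>
      rw [hW.1]
      have h2 := pcnt_mono (w := w) (b := true) hi2
      rw [hw.1] at h2
      exact h2
    | false =>
      have hWf : pcnt W false (2 * n) = n := by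
        have := pcnt_add_pcnt (w := W) (2 * n); have := hW.1; omega
      rw [hWf]
      have h1 := hw.2 i hi2
      have h2 := pcnt_mono (w := w) (b := true) hi2
      rw [hw.1] at h2
      omega
  obtain ⟨h1, h2, h3, h4⟩ := occPos_exists (w := W) (b := ltr w i) hc1 hc2
  exact ⟨⟨h1, h2⟩, h3, h4⟩

lemma occw_ne (hW : IsDyck n W) (hw : IsDyck n w) {i : ℕ} (hi1 : 1 ≤ i)
    (hi2 : i + 1 ≤ 2 * n) : occw W w i ≠ occw W w (i + 1) := by
  obtain ⟨_, hl1, hp1⟩ := occw_spec hW hw hi1 (by omega)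
  obtain ⟨_, hl2, hp2⟩ := occw_spec hW hw (show 1 ≤ i + 1 by omega) hi2
  intro heq
  by_cases hbb : ltr w i = ltr w (i + 1)
  · have hinc := pcnt_letter (w := w) (b := ltr w (i + 1)) (show 1 ≤ i + 1 by omega) rfl
    rw [heq] at hp1
    rw [← hbb] at hp2 hinc
    rw [hp1] at hp2
    simp at hinc
    omega
  · rw [heq] at hl1
    rw [hl1] at hl2
    exact hbb hl2

lemma occw_step (hW : IsDyck n W) (hw : IsDyck n w) (hDW : DWset W w ⊆ S)
    {i : ℕ} (hi1 : 1 ≤ i) (hi2 : i + 1 ≤ 2 * n) (hiS : i ∉ S) :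
    occw W w i < occw W w (i + 1) := by
  have hnd : ¬ (occw W w (i + 1) < occw W w i) := by
    intro hlt
    apply hiS
    apply hDW
    simp only [DWset, Finset.mem_filter, Finset.mem_Icc]
    exact ⟨⟨hi1, by omega⟩, hlt⟩
  have := occw_ne hW hw hi1 hi2
  omega

lemma occw_chain (hW : IsDyck n W) (hw : IsDyck n w) (hDW : DWset W w ⊆ S)
    {a b : ℕ} (ha : 1 ≤ a) (hab : a < b) (hb2 : b ≤ 2 * n)
    (hnotS : ∀ j, a ≤ j → j < b → j ∉ S) : occw W w a < occw W w b := by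
  induction b with
  | zero => omega
  | succ k ih =>
    rcases Nat.lt_or_ge a k with h | h
    · have h1 := ih (by omega) (by omega) (fun j hj1 hj2 => hnotS j hj1 (by omega))
      have h2 : occw W w k < occw W w (k + 1) :=
        occw_step hW hw hDW (by omega) hb2 (hnotS k (by omega) (by omega))
      omega
    · have hak : a = k := by omega
      subst hak
      exact occw_step hW hw hDW ha hb2 (hnotS a (le_refl _) (by omega))

lemma occw_mem_Qset (hS : S ⊆ Finset.Icc 1 (2 * n - 1)) (hn : 0 < n) (hW : IsDyck n W)
    (hw : IsDyck n w) {i j : ℕ} (hi1 : 1 ≤ i) (hi2 : i ≤ 2 * n)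
    (hj1 : segL S i < j) (hj2 : j ≤ segR n S i) :
    occw W w j ∈ Qset n W S (wf S w) i := by
  have hj2n : j ≤ 2 * n := le_trans hj2 (segR_le_two_n hi2)
  have hjpos : 1 ≤ j := by omega
  obtain ⟨⟨ho1, ho2⟩, hol, hop⟩ := occw_spec hW hw hjpos hj2n
  have hFt : Fx n S (wf S w) (segL S i) = pcnt w true (segL S i) :=
    Fx_wf hS hn hw segL_mem_E
  have hFu : Fx n S (wf S w) (segR n S i) = pcnt w true (segR n S i) :=
    Fx_wf hS hn hw (segR_mem_E hi2)
  have htle : pcnt w true (segL S i) ≤ segL S i := by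
    have := pcnt_add_pcnt (w := w) (segL S i); omega
  simp only [Qset, Finset.mem_filter, Finset.mem_Icc]
  refine ⟨⟨ho1, ho2⟩, ?_⟩
  cases hb : ltr w j with
  | true =>
    left
    rw [hb] at hol hop
    refine ⟨hol, ?_, ?_⟩
    · rw [hFt, hop]
      have h1 := pcnt_letter (w := w) hjpos hb
      have h2 := pcnt_mono (w := w) (b := true) (show segL S i ≤ j - 1 by omega)
      omega
    · rw [hFu, hop]
      exact pcnt_mono hj2
  | false =>
    right
    rw [hb] at hol hop
    refine ⟨hol, ?_, ?_⟩
    · rw [hFt, hop]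
      have h1 := pcnt_letter (w := w) hjpos hb
      have h2 := pcnt_mono (w := w) (b := false) (show segL S i ≤ j - 1 by omega)
      have h3 := pcnt_add_pcnt (w := w) (segL S i)
      omega
    · rw [hFu, hop]
      have h2 := pcnt_mono (w := w) (b := false) hj2
      have h3 := pcnt_add_pcnt (w := w) (segR n S i)
      have h4 := pcnt_add_pcnt (w := w) j
      have h5 := pcnt_mono (w := w) (b := true) hj2
      omega

lemma occw_eq_qpos (hS : S ⊆ Finset.Icc 1 (2 * n - 1)) (hn : 0 < n) (hW : IsDyck n W)
    (hw : IsDyck n w) (hDW : DWset W w ⊆ S) {i : ℕ} (hi1 : 1 ≤ i) (hi2 : i ≤ 2 * n) :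
    occw W w i = qpos n W S (wf S w) i := by
  have hf := wf_ok hS hn hw
  have htL : segL S i < i := segL_lt hi1
  have hiR : i ≤ segR n S i := (segR_mem hi2).2
  have hu2n : segR n S i ≤ 2 * n := segR_le_two_n hi2
  have hcard : (Qset n W S (wf S w) i).card = segR n S i - segL S i :=
    card_Qset hS hn hW hf hi1 hi2
  have hnotS : ∀ j, segL S i < j → j < segR n S i → j ∉ S := by
    intro j h1 h2
    rcases Nat.lt_or_ge j i with h | h
    · exact segL_notin h1 h
    · exact segR_notin (n := n) h h2
  have hmono : ∀ r r', 1 ≤ r → r < r' → r' ≤ segR n S i - segL S i →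
      occw W w (segL S i + r) < occw W w (segL S i + r') := by
    intro r r' hr1 hrr hr'
    exact occw_chain hW hw hDW (by omega) (by omega) (by omega)
      (fun j hj1 hj2 => hnotS j (by omega) (by omega))
  have key := nthF_unique (A := Qset n W S (wf S w) i) (c := segR n S i - segL S i)
    hcard (ψ := occw W w) (t := segL S i)
    (fun r hr1 hr2 => occw_mem_Qset hS hn hW hw hi1 hi2 (by omega) (by omega))
    hmono (r := i - segL S i) (by omega) (by omega)
  rw [show segL S i + (i - segL S i) = i by omega] at key
  rw [key, qpos]

lemma mkWord_wf_eq (hS : S ⊆ Finset.Icc 1 (2 * n - 1)) (hn : 0 < n) (hW : IsDyck n W)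
    (hw : IsDyck n w) (hDW : DWset W w ⊆ S) : mkWord n W S (wf S w) = w := by
  funext j
  have hj1 : 1 ≤ (j : ℕ) + 1 := by omega
  have hj2 : (j : ℕ) + 1 ≤ 2 * n := by omega
  have h1 : mkWord n W S (wf S w) j = ltr W (qpos n W S (wf S w) ((j : ℕ) + 1)) := rfl
  rw [h1, ← occw_eq_qpos hS hn hW hw hDW hj1 hj2]
  obtain ⟨_, hol, _⟩ := occw_spec hW hw hj1 hj2
  rw [hol, ltr, dif_pos ⟨hj1, hj2⟩]
  congr 1

end uniqueness
section lowersets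

/-- The lower set with `a` cells in row 0 and `b` cells in row 1. -/
def idl (n a b : ℕ) : Finset (Fin 2 × Fin n) :=
  Finset.univ.filter (fun p => (p.2 : ℕ) < if (p.1 : ℕ) = 0 then a else b)

lemma rowcount (n c : ℕ) (k : ℕ) (hc : c ≤ n) (hk2 : k < 2) :
    ((Finset.univ : Finset (Fin 2 × Fin n)).filter
      (fun p => (p.1 : ℕ) = k ∧ (p.2 : ℕ) < c)).card = c := by
  have key : ((Finset.univ : Finset (Fin 2 × Fin n)).filter
      (fun p => (p.1 : ℕ) = k ∧ (p.2 : ℕ) < c)).card = (Finset.range c).card := by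
    apply Finset.card_bij (fun p _ => (p.2 : ℕ))
    · rintro p hp
      simp only [Finset.mem_filter, Finset.mem_range] at *
      exact hp.2.2
    · rintro p hp p' hp' h
      simp only [Finset.mem_filter] at hp hp'
      ext
      · omega
      · exact h
    · rintro j hj
      simp only [Finset.mem_range] at hj
      exact ⟨(⟨k, hk2⟩, ⟨j, by omega⟩), by simp [hj], rfl⟩
  rw [key, Finset.card_range]

lemma idl_card {n a b : ℕ} (ha : a ≤ n) (hb : b ≤ n) : (idl n a b).card = a + b := by
  have hsplit : idl n a b =
      (Finset.univ.filter (fun p : Fin 2 × Fin n => (p.1 : ℕ) = 0 ∧ (p.2 : ℕ) < a)) ∪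
      (Finset.univ.filter (fun p : Fin 2 × Fin n => (p.1 : ℕ) = 1 ∧ (p.2 : ℕ) < b)) := by
    ext p
    have h2 : (p.1 : ℕ) < 2 := p.1.isLt
    simp only [idl, Finset.mem_filter, Finset.mem_union, Finset.mem_univ, true_and]
    rcases Nat.lt_or_ge (p.1 : ℕ) 1 with h | h
    · rw [if_pos (by omega)]
      constructor
      · intro hlt; exact Or.inl ⟨by omega, hlt⟩
      · rintro (⟨_, hlt⟩ | ⟨h1, _⟩)
        · exact hlt
        · omega
    · rw [if_neg (by omega)]
      constructor
      · intro hlt; exact Or.inr ⟨by omega, hlt⟩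
      · rintro (⟨h1, _⟩ | ⟨_, hlt⟩)
        · omega
        · exact hlt
  rw [hsplit, Finset.card_union_of_disjoint, rowcount n a 0 ha (by omega), rowcount n b 1 hb (by omega)]
  rw [Finset.disjoint_filter]
  rintro x _ ⟨h1, _⟩ ⟨h2, _⟩
  omega

lemma idl_lower {n a b : ℕ} (hba : b ≤ a) :
    IsLowerSet (↑(idl n a b) : Set (Fin 2 × Fin n)) := by
  intro p q hqp hp
  simp only [Finset.coe_filter, idl, Set.mem_setOf_eq, Finset.mem_univ, true_and,
    Finset.mem_coe, Finset.mem_filter] at hp ⊢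
  obtain ⟨hq1, hq2⟩ : (q.1 : ℕ) ≤ (p.1 : ℕ) ∧ (q.2 : ℕ) ≤ (p.2 : ℕ) := by
    obtain ⟨h1, h2⟩ := hqp
    exact ⟨h1, h2⟩
  have h2p : (p.1 : ℕ) < 2 := p.1.isLt
  rcases Nat.lt_or_ge (q.1 : ℕ) 1 with h | h
  · rw [if_pos (by omega)]
    rcases Nat.lt_or_ge (p.1 : ℕ) 1 with h' | h'
    · rw [if_pos (by omega)] at hp; omega
    · rw [if_neg (by omega)] at hp; omega
  · have hp1 : (p.1 : ℕ) = 1 := by omega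
    rw [if_neg (by omega)]
    rw [if_neg (by omega)] at hp
    omega

lemma natPrefix {B : Finset ℕ} (h : ∀ x ∈ B, ∀ y, y < x → y ∈ B) :
    ∀ x, x ∈ B ↔ x < B.card := by
  intro x
  constructor
  · intro hx
    have hsub : Finset.range (x + 1) ⊆ B := by
      intro y hy
      simp only [Finset.mem_range] at hy
      rcases Nat.lt_or_ge y x with h' | h'
      · exact h x hx y h'
      · have : y = x := by omega
        subst this; exact hx
    have := Finset.card_le_card hsub
    rw [Finset.card_range] at this
    omega
  · intro hx
    by_contra hxB
    have hsub : B ⊆ Finset.range x := by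
      intro y hy
      simp only [Finset.mem_range]
      rcases Nat.lt_or_ge y x with h' | h'
      · exact h'
      · exfalso
        rcases Nat.lt_or_ge x y with h'' | h'' 
        · exact hxB (h y hy x h'')
        · have : x = y := by omega
          subst this; exact hxB hy
    have := Finset.card_le_card hsub
    rw [Finset.card_range] at this
    omega

lemma lower_char {n : ℕ} {I : Finset (Fin 2 × Fin n)}
    (hI : IsLowerSet (↑I : Set (Fin 2 × Fin n))) :
    (I.filter (fun p => (p.1 : ℕ) = 1)).card ≤ (I.filter (fun p => (p.1 : ℕ) = 0)).card ∧
    (I.filter (fun p => (p.1 : ℕ) = 0)).card ≤ n ∧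
    I = idl n ((I.filter (fun p => (p.1 : ℕ) = 0)).card)
          ((I.filter (fun p => (p.1 : ℕ) = 1)).card) := by
  classical
  set R0 : Finset ℕ := (I.filter (fun p => (p.1 : ℕ) = 0)).image (fun p => (p.2 : ℕ)) with hR0
  set R1 : Finset ℕ := (I.filter (fun p => (p.1 : ℕ) = 1)).image (fun p => (p.2 : ℕ)) with hR1
  have hinj : ∀ k : ℕ, Set.InjOn (fun p : Fin 2 × Fin n => (p.2 : ℕ))
      ↑(I.filter (fun p => (p.1 : ℕ) = k)) := by
    intro k p hp q hq hpq
    simp only [Finset.coe_filter, Set.mem_setOf_eq] at hp hq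
    ext
    · omega
    · exact hpq
  have hcard0 : R0.card = (I.filter (fun p => (p.1 : ℕ) = 0)).card :=
    Finset.card_image_of_injOn (hinj 0)
  have hcard1 : R1.card = (I.filter (fun p => (p.1 : ℕ) = 1)).card :=
    Finset.card_image_of_injOn (hinj 1)
  have hmem0 : ∀ x : ℕ, x ∈ R0 ↔ ∃ hx : x < n, (⟨0, ⟨x, hx⟩⟩ : Fin 2 × Fin n) ∈ I := by
    intro x
    simp only [hR0, Finset.mem_image, Finset.mem_filter]
    constructor
    · rintro ⟨p, ⟨hpI, hp1⟩, rfl⟩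
      refine ⟨p.2.isLt, ?_⟩
      have : (⟨0, ⟨(p.2 : ℕ), p.2.isLt⟩⟩ : Fin 2 × Fin n) = p := by
        ext
        · simp; omega
        · simp
      rw [this]; exact hpI
    · rintro ⟨hx, hmem⟩
      exact ⟨⟨0, ⟨x, hx⟩⟩, ⟨hmem, rfl⟩, rfl⟩
  have hmem1 : ∀ x : ℕ, x ∈ R1 ↔ ∃ hx : x < n, (⟨1, ⟨x, hx⟩⟩ : Fin 2 × Fin n) ∈ I := by
    intro x
    simp only [hR1, Finset.mem_image, Finset.mem_filter]
    constructor
    · rintro ⟨p, ⟨hpI, hp1⟩, rfl⟩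
      refine ⟨p.2.isLt, ?_⟩
      have : (⟨1, ⟨(p.2 : ℕ), p.2.isLt⟩⟩ : Fin 2 × Fin n) = p := by
        ext
        · simp; omega
        · simp
      rw [this]; exact hpI
    · rintro ⟨hx, hmem⟩
      exact ⟨⟨1, ⟨x, hx⟩⟩, ⟨hmem, rfl⟩, rfl⟩
  have hdc0 : ∀ x ∈ R0, ∀ y, y < x → y ∈ R0 := by
    intro x hx y hy
    rw [hmem0] at hx
    obtain ⟨hxn, hxI⟩ := hx
    rw [hmem0]
    refine ⟨by omega, ?_⟩
    apply hI _ hxI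
    constructor
    · exact le_refl _
    · simp only [Fin.mk_le_mk]; omega
  have hdc1 : ∀ x ∈ R1, ∀ y, y < x → y ∈ R1 := by
    intro x hx y hy
    rw [hmem1] at hx
    obtain ⟨hxn, hxI⟩ := hx
    rw [hmem1]
    refine ⟨by omega, ?_⟩
    apply hI _ hxI
    constructor
    · exact le_refl _
    · simp only [Fin.mk_le_mk]; omega
  have hsub10 : R1 ⊆ R0 := by
    intro x hx
    rw [hmem1] at hx
    obtain ⟨hxn, hxI⟩ := hx
    rw [hmem0]
    refine ⟨hxn, ?_⟩
    apply hI _ hxI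
    constructor
    · simp [Fin.le_def]
    · exact le_refl _
  have hR0n : R0 ⊆ Finset.range n := by
    intro x hx
    rw [hmem0] at hx
    simp only [Finset.mem_range]
    exact hx.1
  refine ⟨?_, ?_, ?_⟩
  · rw [← hcard0, ← hcard1]
    exact Finset.card_le_card hsub10
  · rw [← hcard0]
    have := Finset.card_le_card hR0n
    rw [Finset.card_range] at this
    exact this
  · ext p
    simp only [idl, Finset.mem_filter, Finset.mem_univ, true_and]
    have h2p : (p.1 : ℕ) < 2 := p.1.isLt
    have hp0 : p ∈ I ∧ (p.1 : ℕ) = 0 ↔ ((p.1 : ℕ) = 0 ∧ (p.2 : ℕ) ∈ R0) := by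
      constructor
      · rintro ⟨hpI, hp1⟩
        refine ⟨hp1, ?_⟩
        rw [hmem0]
        refine ⟨p.2.isLt, ?_⟩
        have : (⟨0, ⟨(p.2 : ℕ), p.2.isLt⟩⟩ : Fin 2 × Fin n) = p := by
          ext
          · simp; omega
          · simp
        rw [this]; exact hpI
      · rintro ⟨hp1, hp2⟩
        rw [hmem0] at hp2
        obtain ⟨_, hpI⟩ := hp2
        refine ⟨?_, hp1⟩
        have : (⟨0, ⟨(p.2 : ℕ), p.2.isLt⟩⟩ : Fin 2 × Fin n) = p := by
          ext
          · simp; omega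
          · simp
        rw [← this]; exact hpI
    have hp1 : p ∈ I ∧ (p.1 : ℕ) = 1 ↔ ((p.1 : ℕ) = 1 ∧ (p.2 : ℕ) ∈ R1) := by
      constructor
      · rintro ⟨hpI, hp1⟩
        refine ⟨hp1, ?_⟩
        rw [hmem1]
        refine ⟨p.2.isLt, ?_⟩
        have : (⟨1, ⟨(p.2 : ℕ), p.2.isLt⟩⟩ : Fin 2 × Fin n) = p := by
          ext
          · simp; omega
          · simp
        rw [this]; exact hpI
      · rintro ⟨hp1, hp2⟩
        rw [hmem1] at hp2
        obtain ⟨_, hpI⟩ := hp2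
        refine ⟨?_, hp1⟩
        have : (⟨1, ⟨(p.2 : ℕ), p.2.isLt⟩⟩ : Fin 2 × Fin n) = p := by
          ext
          · simp; omega
          · simp
        rw [← this]; exact hpI
  -- now the membership equivalence
    rcases Nat.lt_or_ge (p.1 : ℕ) 1 with h | h
    · rw [if_pos (by omega)]
      have e0 := natPrefix hdc0 (p.2 : ℕ)
      rw [hcard0] at e0
      constructor
      · intro hpI
        rw [← e0]
        exact (hp0.mp ⟨hpI, by omega⟩).2
      · intro hlt
        exact (hp0.mpr ⟨by omega, e0.mpr hlt⟩).1
    · rw [if_neg (by omega)]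
      have e1 := natPrefix hdc1 (p.2 : ℕ)
      rw [hcard1] at e1
      constructor
      · intro hpI
        rw [← e1]
        exact (hp1.mp ⟨hpI, by omega⟩).2
      · intro hlt
        exact (hp1.mpr ⟨by omega, e1.mpr hlt⟩).1

lemma idl_rowcard0 {n a b : ℕ} (ha : a ≤ n) :
    ((idl n a b).filter (fun p => (p.1 : ℕ) = 0)).card = a := by
  have : (idl n a b).filter (fun p => (p.1 : ℕ) = 0)
      = Finset.univ.filter (fun p : Fin 2 × Fin n => (p.1 : ℕ) = 0 ∧ (p.2 : ℕ) < a) := by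
    ext p
    simp only [idl, Finset.filter_filter, Finset.mem_filter, Finset.mem_univ, true_and]
    constructor
    · rintro ⟨hlt, h0⟩
      rw [if_pos h0] at hlt
      exact ⟨h0, hlt⟩
    · rintro ⟨h0, hlt⟩
      rw [if_pos h0]
      exact ⟨hlt, h0⟩
  rw [this, rowcount n a 0 ha (by omega)]

lemma idl_card_split {n : ℕ} (I : Finset (Fin 2 × Fin n)) :
    (I.filter (fun p => (p.1 : ℕ) = 0)).card + (I.filter (fun p => (p.1 : ℕ) = 1)).card
      = I.card := by
  have h := Finset.card_filter_add_card_filter_not (s := I)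
    (p := fun p => (p.1 : ℕ) = 0)
  have h2 : I.filter (fun p => ¬ ((p.1 : ℕ) = 0)) = I.filter (fun p => (p.1 : ℕ) = 1) := by
    apply Finset.filter_congr
    intro p _
    have : (p.1 : ℕ) < 2 := p.1.isLt
    constructor
    · intro hp; simp at hp ⊢; omega
    · intro hp; simp at hp ⊢; omega
  rw [h2] at h
  exact h

lemma idl_mono {n a b a' b' : ℕ} (ha : a ≤ a') (hb : b ≤ b') :
    idl n a b ⊆ idl n a' b' := by
  intro p hp
  simp only [idl, Finset.mem_filter, Finset.mem_univ, true_and] at hp ⊢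
  split at hp <;> split <;> omega

lemma idl_le {n a b a' b' : ℕ} (h : idl n a b ⊆ idl n a' b')
    (ha : a ≤ n) (hb : b ≤ n) : a ≤ a' ∧ b ≤ b' := by
  constructor
  · rcases Nat.eq_zero_or_pos a with h0 | h0
    · omega
    · have hmem : (⟨⟨0, by omega⟩, ⟨a - 1, by omega⟩⟩ : Fin 2 × Fin n) ∈ idl n a b := by
        simp only [idl, Finset.mem_filter, Finset.mem_univ, true_and]
        show a - 1 < if (0 : ℕ) = 0 then a else b
        rw [if_pos rfl]
        omega
      have h2 := h hmem
      simp only [idl, Finset.mem_filter, Finset.mem_univ, true_and] at h2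
      have h3 : a - 1 < if (0 : ℕ) = 0 then a' else b' := h2
      rw [if_pos rfl] at h3
      omega
  · rcases Nat.eq_zero_or_pos b with h0 | h0
    · omega
    · have hmem : (⟨⟨1, by omega⟩, ⟨b - 1, by omega⟩⟩ : Fin 2 × Fin n) ∈ idl n a b := by
        simp only [idl, Finset.mem_filter, Finset.mem_univ, true_and]
        show b - 1 < if (1 : ℕ) = 0 then a else b
        rw [if_neg (by omega)]
        omega
      have h2 := h hmem
      simp only [idl, Finset.mem_filter, Finset.mem_univ, true_and] at h2
      have h3 : b - 1 < if (1 : ℕ) = 0 then a' else b' := h2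
      rw [if_neg (by omega)] at h3
      omega

end lowersets
section chains

def ChainP (n : ℕ) (S : Finset ℕ) (C : Finset (Finset (Fin 2 × Fin n))) : Prop :=
  (∀ I ∈ C, IsLowerSet (↑I : Set (Fin 2 × Fin n))) ∧
  IsChain (· ⊆ ·) (↑C : Set (Finset (Fin 2 × Fin n))) ∧ C.image Finset.card = S

def aC (n : ℕ) (C : Finset (Finset (Fin 2 × Fin n))) (s : ℕ) : ℕ :=
  (C.filter (fun I => I.card = s)).sup (fun I => (I.filter (fun p => (p.1 : ℕ) = 0)).card)

def wC (n : ℕ) (S : Finset ℕ) (C : Finset (Finset (Fin 2 × Fin n))) : ℕ → ℕ :=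
  fun s => if s ∈ S then aC n C s else 0

def Cf (n : ℕ) (S : Finset ℕ) (f : ℕ → ℕ) : Finset (Finset (Fin 2 × Fin n)) :=
  S.image (fun s => idl n (f s) (s - f s))

variable {n : ℕ} {S : Finset ℕ} {f : ℕ → ℕ} {C : Finset (Finset (Fin 2 × Fin n))}

lemma chain_unique (hC : IsChain (· ⊆ ·) (↑C : Set (Finset (Fin 2 × Fin n))))
    {I I' : Finset (Fin 2 × Fin n)} (hI : I ∈ C) (hI' : I' ∈ C)
    (h : I.card = I'.card) : I = I' := by
  by_contra hne
  rcases hC (Finset.mem_coe.mpr hI) (Finset.mem_coe.mpr hI') hne with h1 | h1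
  · exact hne (Finset.eq_of_subset_of_card_le h1 (le_of_eq h.symm))
  · exact hne (Finset.eq_of_subset_of_card_le h1 (le_of_eq h)).symm

lemma chain_sub (hC : IsChain (· ⊆ ·) (↑C : Set (Finset (Fin 2 × Fin n))))
    {I I' : Finset (Fin 2 × Fin n)} (hI : I ∈ C) (hI' : I' ∈ C)
    (h : I.card ≤ I'.card) : I ⊆ I' := by
  by_cases hne : I = I'
  · subst hne; exact Finset.Subset.refl _
  rcases hC (Finset.mem_coe.mpr hI) (Finset.mem_coe.mpr hI') hne with h1 | h1
  · exact h1
  · rw [Finset.eq_of_subset_of_card_le h1 h]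

lemma chainA (hP : ChainP n S C) {s : ℕ} (hs : s ∈ S) :
    aC n C s ≤ n ∧ s - aC n C s ≤ aC n C s ∧ aC n C s ≤ s ∧
    idl n (aC n C s) (s - aC n C s) ∈ C ∧ (idl n (aC n C s) (s - aC n C s)).card = s ∧
    C.filter (fun J => J.card = s) = {idl n (aC n C s) (s - aC n C s)} := by
  obtain ⟨hlow, hch, him⟩ := hP
  rw [← him] at hs
  obtain ⟨I, hI, hIs⟩ := Finset.mem_image.mp hs
  have hfilter : C.filter (fun J => J.card = s) = {I} := by
    ext J
    simp only [Finset.mem_filter, Finset.mem_singleton]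
    constructor
    · rintro ⟨hJ, hJs⟩
      exact chain_unique hch hJ hI (by rw [hJs, hIs])
    · rintro rfl
      exact ⟨hI, hIs⟩
  have haC : aC n C s = (I.filter (fun p => (p.1 : ℕ) = 0)).card := by
    rw [aC, hfilter, Finset.sup_singleton]
  obtain ⟨hba, han, hidl⟩ := lower_char (hlow I hI)
  have hsplit := idl_card_split I
  rw [hIs] at hsplit
  have hb : (I.filter (fun p => (p.1 : ℕ) = 1)).card = s - aC n C s := by omega
  have hIidl : I = idl n (aC n C s) (s - aC n C s) := by
    have hb2 : (I.filter (fun p => (p.1 : ℕ) = 1)).card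
        = s - (I.filter (fun p => (p.1 : ℕ) = 0)).card := by omega
    rw [hidl, hb2, ← haC]
  refine ⟨by omega, by omega, by omega, ?_, ?_, ?_⟩
  · rw [← hIidl]; exact hI
  · rw [← hIidl]; exact hIs
  · rw [← hIidl]; exact hfilter

lemma wC_ok (hS : S ⊆ Finset.Icc 1 (2 * n - 1)) (hn : 0 < n) (hP : ChainP n S C) :
    OkF n S (wC n S C) := by
  have hSn : ∀ s ∈ S, 1 ≤ s ∧ s ≤ 2 * n - 1 := by
    intro s hs; have := hS hs; simp [Finset.mem_Icc] at this; exact this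
  have hFxS : ∀ s ∈ S, Fx n S (wC n S C) s = aC n C s := by
    intro s hs; rw [Fx_mem hs, wC, if_pos hs]
  refine ⟨fun i hi => by rw [wC, if_neg hi], ?_, ?_⟩
  · intro s hs
    rcases Finset.mem_insert.mp hs with h | h
    · subst h; omega
    rcases Finset.mem_insert.mp h with h | h
    · subst h; rw [Fx_two_n hS hn]
    · obtain ⟨h1, h2, h3, _, _, _⟩ := chainA hP h
      rw [hFxS s h]
      omega
  · intro s hs s' hs' hss
    have hval : ∀ x ∈ insert 0 (insert (2 * n) S), (Fx n S (wC n S C) x = 0 ∧ x = 0) ∨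
        (Fx n S (wC n S C) x = n ∧ x = 2 * n) ∨ (x ∈ S ∧ Fx n S (wC n S C) x = aC n C x) := by
      intro x hx
      rcases Finset.mem_insert.mp hx with h | h
      · subst h; exact Or.inl ⟨Fx_zero hS hn, rfl⟩
      rcases Finset.mem_insert.mp h with h | h
      · subst h; exact Or.inr (Or.inl ⟨Fx_two_n hS hn, rfl⟩)
      · exact Or.inr (Or.inr ⟨h, hFxS x h⟩)
    rcases hval s hs with ⟨hv, he⟩ | ⟨hv, he⟩ | ⟨hmem, hv⟩ <;>
      rcases hval s' hs' with ⟨hv', he'⟩ | ⟨hv', he'⟩ | ⟨hmem', hv'⟩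
    · omega
    · rw [hv, hv']; subst he he'; omega
    · obtain ⟨h1, h2, h3, _, _, _⟩ := chainA hP hmem'
      have := (hSn s' hmem').1
      rw [hv, hv']
      subst he
      omega
    · subst he he'; have := hSn; omega
    · rw [hv, hv']; omega
    · exfalso; have := (hSn s' hmem').2; omega
    · exfalso; have := (hSn s hmem).1; omega
    · obtain ⟨h1, h2, h3, _, _, _⟩ := chainA hP hmem
      have := (hSn s hmem).2
      rw [hv, hv']
      subst he'
      omega
    · -- both in S
      obtain ⟨h1, h2, h3, hI, hIc, _⟩ := chainA hP hmem
      obtain ⟨h1', h2', h3', hI', hIc', _⟩ := chainA hP hmem'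
      have hsub : idl n (aC n C s) (s - aC n C s) ⊆ idl n (aC n C s') (s' - aC n C s') :=
        chain_sub hP.2.1 hI hI' (by rw [hIc, hIc']; exact hss)
      obtain ⟨hle1, hle2⟩ := idl_le hsub h1 (by have := (hSn s hmem).2; omega)
      rw [hv, hv']
      omega

lemma okf_pt (hS : S ⊆ Finset.Icc 1 (2 * n - 1)) (hn : 0 < n) (hf : OkF n S f)
    {s : ℕ} (hs : s ∈ S) : s ≤ 2 * f s ∧ f s ≤ s ∧ f s ≤ n ∧ s - f s ≤ n := by
  have hsE : s ∈ insert 0 (insert (2 * n) S) := by simp [hs]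
  obtain ⟨_, _, m3, m4, m5, m6, m7, m8, _⟩ := seg_facts hS hn hf hsE hsE (le_refl s)
  rw [Fx_mem hs] at m4 m6 m7 m8
  exact ⟨m6, m4, m7, m8⟩

lemma okf_pair (hS : S ⊆ Finset.Icc 1 (2 * n - 1)) (hn : 0 < n) (hf : OkF n S f)
    {s s' : ℕ} (hs : s ∈ S) (hs' : s' ∈ S) (hss : s ≤ s') :
    f s ≤ f s' ∧ s - f s ≤ s' - f s' := by
  have hsE : s ∈ insert 0 (insert (2 * n) S) := by simp [hs]
  have hsE' : s' ∈ insert 0 (insert (2 * n) S) := by simp [hs']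
  obtain ⟨m1, m2, m3, m4, _, _, _, _, _⟩ := seg_facts hS hn hf hsE hsE' hss
  rw [Fx_mem hs] at m1 m2 m3
  rw [Fx_mem hs'] at m1 m2 m4
  exact ⟨m1, by omega⟩

lemma Cf_chainP (hS : S ⊆ Finset.Icc 1 (2 * n - 1)) (hn : 0 < n) (hf : OkF n S f) :
    ChainP n S (Cf n S f) := by
  refine ⟨?_, ?_, ?_⟩
  · intro I hI
    obtain ⟨s, hs, rfl⟩ := Finset.mem_image.mp hI
    obtain ⟨h1, h2, h3, h4⟩ := okf_pt hS hn hf hs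
    exact idl_lower (by omega)
  · intro I hI I' hI' hne
    obtain ⟨s, hs, rfl⟩ := Finset.mem_image.mp (Finset.mem_coe.mp hI)
    obtain ⟨s', hs', rfl⟩ := Finset.mem_image.mp (Finset.mem_coe.mp hI')
    rcases le_total s s' with h | h
    · obtain ⟨ha, hb⟩ := okf_pair hS hn hf hs hs' h
      exact Or.inl (idl_mono ha hb)
    · obtain ⟨ha, hb⟩ := okf_pair hS hn hf hs' hs h
      exact Or.inr (idl_mono ha hb)
  · rw [Cf, Finset.image_image]
    have : ∀ s ∈ S, (Finset.card ∘ fun s => idl n (f s) (s - f s)) s = id s := by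
      intro s hs
      obtain ⟨h1, h2, h3, h4⟩ := okf_pt hS hn hf hs
      simp only [Function.comp_apply, id_eq]
      rw [idl_card h3 h4]
      omega
    rw [Finset.image_congr this, Finset.image_id]

lemma wC_Cf (hS : S ⊆ Finset.Icc 1 (2 * n - 1)) (hn : 0 < n) (hf : OkF n S f) :
    wC n S (Cf n S f) = f := by
  have hcp := Cf_chainP hS hn hf
  funext s
  by_cases hs : s ∈ S
  · obtain ⟨h1, h2, h3, h4⟩ := okf_pt hS hn hf hs
    have hmem : idl n (f s) (s - f s) ∈ Cf n S f :=
      Finset.mem_image.mpr ⟨s, hs, rfl⟩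
    have hcardI : (idl n (f s) (s - f s)).card = s := by
      rw [idl_card h3 h4]; omega
    have hfilter : (Cf n S f).filter (fun J => J.card = s) = {idl n (f s) (s - f s)} := by
      ext J
      simp only [Finset.mem_filter, Finset.mem_singleton]
      constructor
      · rintro ⟨hJ, hJs⟩
        exact chain_unique hcp.2.1 hJ hmem (by rw [hJs, hcardI])
      · rintro rfl
        exact ⟨hmem, hcardI⟩
    rw [wC, if_pos hs, aC, hfilter, Finset.sup_singleton, idl_rowcard0 h3]
  · rw [wC, if_neg hs, hf.1 s hs]

lemma Cf_wC (hS : S ⊆ Finset.Icc 1 (2 * n - 1)) (hn : 0 < n) (hP : ChainP n S C) :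
    Cf n S (wC n S C) = C := by
  ext I
  rw [Cf]
  constructor
  · intro hI
    obtain ⟨s, hs, rfl⟩ := Finset.mem_image.mp hI
    rw [wC, if_pos hs]
    exact (chainA hP hs).2.2.2.1
  · intro hI
    have hcard : I.card ∈ S := by
      rw [← hP.2.2]
      exact Finset.mem_image_of_mem _ hI
    have hIf : I ∈ C.filter (fun J => J.card = I.card) := by
      simp [hI]
    rw [(chainA hP hcard).2.2.2.2.2] at hIf
    rw [Finset.mem_singleton] at hIf
    apply Finset.mem_image.mpr
    refine ⟨I.card, hcard, ?_⟩
    rw [wC, if_pos hcard, ← hIf]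

lemma card_chain_eq (hS : S ⊆ Finset.Icc 1 (2 * n - 1)) (hn : 0 < n) :
    Nat.card {C : Finset (Finset (Fin 2 × Fin n)) // ChainP n S C}
      = Nat.card {f : ℕ → ℕ // OkF n S f} := by
  apply Nat.card_congr
  exact {
    toFun := fun C => ⟨wC n S C.1, wC_ok hS hn C.2⟩
    invFun := fun f => ⟨Cf n S f.1, Cf_chainP hS hn f.2⟩
    left_inv := fun C => Subtype.ext (Cf_wC hS hn C.2)
    right_inv := fun f => Subtype.ext (wC_Cf hS hn f.2) }

lemma card_word_eq {W : Fin (2 * n) → Bool} (hS : S ⊆ Finset.Icc 1 (2 * n - 1)) (hn : 0 < n)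
    (hW : IsDyck n W) :
    Nat.card {w : Fin (2 * n) → Bool // IsDyck n w ∧ DWset W w ⊆ S}
      = Nat.card {f : ℕ → ℕ // OkF n S f} := by
  apply Nat.card_congr
  refine {
    toFun := fun w => ⟨wf S w.1, wf_ok hS hn w.2.1⟩
    invFun := fun f => ⟨mkWord n W S f.1, mkWord_isDyck hS hn hW f.2,
      mkWord_DW_subset hS hn hW f.2⟩
    left_inv := fun w => Subtype.ext (mkWord_wf_eq hS hn hW w.2.1 w.2.2)
    right_inv := fun f => Subtype.ext ?_ }
  funext s
  by_cases hs : s ∈ S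
  · have hs2 : s ≤ 2 * n := by
      have := hS hs; simp [Finset.mem_Icc] at this; omega
    simp only [wf]
    rw [if_pos hs, count_end hS hn hW f.2 hs2 (Or.inl hs), Fx_mem hs]
  · simp only [wf]
    rw [if_neg hs, f.2.1 s hs]

lemma flagAlpha_eq_word {W : Fin (2 * n) → Bool} (hS : S ⊆ Finset.Icc 1 (2 * n - 1))
    (hn : 0 < n) (hW : IsDyck n W) :
    flagAlpha n S
      = Nat.card {w : Fin (2 * n) → Bool // IsDyck n w ∧ DWset W w ⊆ S} := by
  have h1 : flagAlpha n S = Nat.card {C : Finset (Finset (Fin 2 × Fin n)) // ChainP n S C} :=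
    rfl
  rw [h1, card_chain_eq hS hn, card_word_eq hS hn hW]

end chains
section final

variable {n : ℕ}

lemma alt_sum (X : Finset ℕ) :
    ∑ V ∈ X.powerset, (-1 : ℤ) ^ (X.card - V.card) = if X = ∅ then 1 else 0 := by
  have hterm : ∀ V ∈ X.powerset, (-1 : ℤ) ^ (X.card - V.card)
      = (-1 : ℤ) ^ X.card * (-1 : ℤ) ^ V.card := by
    intro V hV
    have hsub := Finset.mem_powerset.mp hV
    have hc : V.card ≤ X.card := Finset.card_le_card hsub
    rw [← pow_add, neg_one_pow_eq_pow_mod_two,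
      neg_one_pow_eq_pow_mod_two (n := X.card + V.card)]
    congr 1
    omega
  rw [Finset.sum_congr rfl hterm, ← Finset.mul_sum,
    Finset.sum_powerset_neg_one_pow_card]
  by_cases hX : X = ∅
  · simp [hX]
  · simp [hX]

lemma signSum {U S : Finset ℕ} (hUS : U ⊆ S) :
    ∑ T ∈ S.powerset.filter (fun T => U ⊆ T), (-1 : ℤ) ^ (S.card - T.card)
      = if U = S then 1 else 0 := by
  classical
  have hre : ∑ T ∈ S.powerset.filter (fun T => U ⊆ T), (-1 : ℤ) ^ (S.card - T.card)
      = ∑ V ∈ (S \ U).powerset, (-1 : ℤ) ^ (S.card - (U ∪ V).card) := by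
    apply Finset.sum_bij' (i := fun T _ => T \ U) (j := fun V _ => U ∪ V)
    · intro T hT
      simp only [Finset.mem_filter, Finset.mem_powerset] at hT
      rw [Finset.mem_powerset]
      exact Finset.sdiff_subset_sdiff hT.1 (Finset.Subset.refl _)
    · intro V hV
      simp only [Finset.mem_powerset] at hV
      simp only [Finset.mem_filter, Finset.mem_powerset]
      constructor
      · apply Finset.union_subset hUS
        exact subset_trans hV (Finset.sdiff_subset)
      · exact Finset.subset_union_left
    · intro T hT
      simp only [Finset.mem_filter] at hT
      exact Finset.union_sdiff_of_subset hT.2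
    · intro V hV
      simp only [Finset.mem_powerset] at hV
      apply Finset.union_sdiff_cancel_left
      exact Finset.disjoint_of_subset_right hV Finset.sdiff_disjoint.symm
    · intro T hT
      simp only [Finset.mem_filter] at hT
      rw [Finset.union_sdiff_of_subset hT.2]
  rw [hre]
  have hexp : ∀ V ∈ (S \ U).powerset,
      (-1 : ℤ) ^ (S.card - (U ∪ V).card) = (-1 : ℤ) ^ ((S \ U).card - V.card) := by
    intro V hV
    have hVsub := Finset.mem_powerset.mp hV
    have hdisj : Disjoint U V :=
      Finset.disjoint_of_subset_right hVsub Finset.sdiff_disjoint.symm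
    have h1 : (U ∪ V).card = U.card + V.card := Finset.card_union_of_disjoint hdisj
    have h2 : (S \ U).card = S.card - U.card := Finset.card_sdiff_of_subset hUS
    have h3 : U.card ≤ S.card := Finset.card_le_card hUS
    have h4 : V.card ≤ (S \ U).card := Finset.card_le_card hVsub
    rw [h1, h2]
    congr 1
    omega
  rw [Finset.sum_congr rfl hexp, alt_sum]
  congr 1
  simp only [eq_iff_iff]
  rw [Finset.sdiff_eq_empty_iff_subset]
  constructor
  · intro h; exact Finset.Subset.antisymm hUS h
  · intro h; rw [h]

lemma nat_card_word (P : (Fin (2 * n) → Bool) → Prop) [DecidablePred P] :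
    Nat.card {w : Fin (2 * n) → Bool // P w}
      = (Finset.univ.filter P).card := by
  rw [Nat.card_eq_fintype_card, Fintype.card_subtype]

lemma flagAlpha_sum {W : Fin (2 * n) → Bool} (hn : 0 < n) (hW : IsDyck n W)
    {T : Finset ℕ} (hT : T ⊆ Finset.Icc 1 (2 * n - 1)) :
    (flagAlpha n T : ℤ) = ∑ U ∈ T.powerset,
      (Nat.card {w : Fin (2 * n) → Bool // IsDyck n w ∧ DWset W w = U} : ℤ) := by
  classical
  rw [flagAlpha_eq_word hT hn hW, nat_card_word]
  have hfib := Finset.card_eq_sum_card_fiberwise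
    (s := Finset.univ.filter (fun w : Fin (2 * n) → Bool => IsDyck n w ∧ DWset W w ⊆ T))
    (t := T.powerset) (f := fun w => DWset W w)
    (by
      intro w hw
      rw [Finset.mem_coe, Finset.mem_filter] at hw
      exact Finset.mem_powerset.mpr hw.2.2)
  rw [hfib]
  push_cast
  apply Finset.sum_congr rfl
  intro U hU
  have hUT := Finset.mem_powerset.mp hU
  rw [nat_card_word, Finset.filter_filter]
  congr 1
  congr 1
  apply Finset.filter_congr
  intro w _
  constructor
  · rintro ⟨⟨h1, _⟩, h2⟩
    exact ⟨h1, h2⟩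
  · rintro ⟨h1, h2⟩
    exact ⟨⟨h1, by rw [h2]; exact hUT⟩, h2⟩

end final

/-- For any fixed Dyck path `W` of length `2n` and `S ⊆ [2n-1]`, the flag
`h`-vector of `J(2 × n)` satisfies
`β(S) = #{w ∈ 𝒟_n : D_W(w) = S}`. -/
theorem flagBeta_eq_card_descentSet_wrt (n : ℕ) (hn : 0 < n)
    (W : Fin (2 * n) → Bool) (hW : IsDyck n W)
    (S : Finset ℕ) (hS : S ⊆ Finset.Icc 1 (2 * n - 1)) :
    flagBeta n S =
      Nat.card {w : Fin (2 * n) → Bool // IsDyck n w ∧ DWset W w = S} := by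
  classical
  rw [flagBeta]
  have hstep1 : ∀ T ∈ S.powerset, (-1 : ℤ) ^ (S.card - T.card) * (flagAlpha n T : ℤ)
      = ∑ U ∈ T.powerset, (-1 : ℤ) ^ (S.card - T.card) *
          (Nat.card {w : Fin (2 * n) → Bool // IsDyck n w ∧ DWset W w = U} : ℤ) := by
    intro T hT
    rw [flagAlpha_sum hn hW (subset_trans (Finset.mem_powerset.mp hT) hS), Finset.mul_sum]
  rw [Finset.sum_congr rfl hstep1]
  rw [Finset.sum_comm' (s := S.powerset) (t := fun T => T.powerset) (t' := S.powerset)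
    (s' := fun U => S.powerset.filter (fun T => U ⊆ T))
    (fun T U => by
      simp only [Finset.mem_powerset, Finset.mem_filter]
      constructor
      · rintro ⟨h1, h2⟩
        exact ⟨⟨h1, h2⟩, subset_trans h2 h1⟩
      · rintro ⟨⟨h1, h2⟩, _⟩
        exact ⟨h1, h2⟩)]
  have hstep2 : ∀ U ∈ S.powerset,
      (∑ T ∈ S.powerset.filter (fun T => U ⊆ T), (-1 : ℤ) ^ (S.card - T.card) *
        (Nat.card {w : Fin (2 * n) → Bool // IsDyck n w ∧ DWset W w = U} : ℤ))
      = (if U = S then 1 else 0) *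
          (Nat.card {w : Fin (2 * n) → Bool // IsDyck n w ∧ DWset W w = U} : ℤ) := by
    intro U hU
    rw [← Finset.sum_mul, signSum (Finset.mem_powerset.mp hU)]
  rw [Finset.sum_congr rfl hstep2]
  simp only [ite_mul, one_mul, zero_mul]
  rw [Finset.sum_ite_eq' S.powerset S
    (fun U => (Nat.card {w : Fin (2 * n) → Bool // IsDyck n w ∧ DWset W w = U} : ℤ)),
    if_pos (Finset.mem_powerset_self S)]
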